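/- arXiv:math/0411445 — 4 statements merged into one kernel-verified Lean document; each statement's English description precedes it below -/
import Mathlib

section
/- Let X be a reduced set of points in P^2 whose homogeneous ideal I_X has Castelnuovo–Mumford regularity r+1 (equivalently, X imposes independent conditions on forms of degree r). Let Z be the first infinitesimal neighborhood of X (the scheme defined by the intersection of the squares of the ideals of the points of X). Then reg(I_Z) ≤ 2·reg(I_X) = 2r+2; i.e., Z imposes independent conditions on forms of degree 2r+1. -/
open MvPolynomial

noncomputable section

variable {k : Type} [Field k]

/-- The polynomial ring `k[x₀,x₁,x₂]`. -/
abbrev R3 (k : Type) [Field k] := MvPolynomial (Fin 3) k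

/-- The ideal of polynomials vanishing on a set of affine representatives in `k³`. -/
def vIdeal (S : Set (Fin 3 → k)) : Ideal (R3 k) where
  carrier := {f | ∀ x ∈ S, eval x f = 0}
  add_mem' := by intro a b ha hb x hx; simp [map_add, ha x hx, hb x hx]
  zero_mem' := by intro x _; simp
  smul_mem' := by intro c f hf x hx; simp [smul_eq_mul, map_mul, hf x hx]

/-- The (prime) ideal of the point of `ℙ²` with representative `p`. -/
def pointIdeal (p : Fin 3 → k) : Ideal (R3 k) := vIdeal {x | ∃ c : k, x = c • p}

/-- The radical (saturated) ideal of a finite set of points. -/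
def radIdeal (X : Finset (Fin 3 → k)) : Ideal (R3 k) := ⨅ p ∈ X, pointIdeal p

/-- The saturated ideal of the first infinitesimal neighborhood (double point scheme). -/
def dblIdeal (X : Finset (Fin 3 → k)) : Ideal (R3 k) := ⨅ p ∈ X, (pointIdeal p) ^ 2

/-- Hilbert function of `R/I` in degree `t`. -/
def hilb (I : Ideal (R3 k)) (t : ℕ) : ℕ :=
  Module.finrank k (homogeneousSubmodule (Fin 3) k t) -
    Module.finrank k ↥(Submodule.restrictScalars k I ⊓ homogeneousSubmodule (Fin 3) k t)

/-- Regularity of a zero-dimensional scheme: least `t > 0` with `Δ h_{R/I}(t) = 0`. -/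
def regC (I : Ideal (R3 k)) : ℕ := sInf {t | 0 < t ∧ hilb I t = hilb I (t - 1)}

/-- Two representatives give the same projective point. -/
def SameProj (p q : Fin 3 → k) : Prop := ∃ c : k, c ≠ 0 ∧ q = c • p

/-- A finite set of representatives of distinct points of `ℙ²`. -/
def GoodPoints (X : Finset (Fin 3 → k)) : Prop :=
  (∀ p ∈ X, p ≠ 0) ∧ ∀ p ∈ X, ∀ q ∈ X, p ≠ q → ¬ SameProj p q

/-- The point `q` lies on the line with normal vector `ℓ`. -/
def onLine (ℓ q : Fin 3 → k) : Prop := (∑ i, ℓ i * q i) = 0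

/-- `t` distinct lines, no three concurrent: each line meets the others in distinct points. -/
def GenLines (t : ℕ) (ℓ : Fin t → (Fin 3 → k)) : Prop :=
  (∀ i, ℓ i ≠ 0) ∧ (∀ i j, i ≠ j → ¬ SameProj (ℓ i) (ℓ j)) ∧
    ∀ i j l, i ≠ j → j ≠ l → i ≠ l →
      ∀ p : Fin 3 → k, p ≠ 0 → ¬ (onLine (ℓ i) p ∧ onLine (ℓ j) p ∧ onLine (ℓ l) p)

/-- `X` is (a set of representatives of) the `t.choose 2` pairwise intersection
points of the lines `ℓ`. -/
def IsIntersectionConfig (t : ℕ) (ℓ : Fin t → (Fin 3 → k)) (X : Finset (Fin 3 → k)) : Prop :=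
  GoodPoints X ∧ X.card = t.choose 2 ∧
    (∀ p ∈ X, ∃ i j, i ≠ j ∧ onLine (ℓ i) p ∧ onLine (ℓ j) p) ∧
    (∀ i j, i ≠ j → ∃ p ∈ X, onLine (ℓ i) p ∧ onLine (ℓ j) p)

/-- The linear form with coefficient vector `a`. -/
def linForm (a : Fin 3 → k) : R3 k := ∑ i, C (a i) * X i

/-- `F` is (up to scalar) a product of `d` lines, each meeting the remaining
lines in `d-1` distinct points. -/
def IsGeneralLineUnion (d : ℕ) (F : R3 k) : Prop :=
  ∃ (c : k) (ℓ : Fin d → (Fin 3 → k)), c ≠ 0 ∧ GenLines d ℓ ∧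
    F = C c * ∏ i, linForm (ℓ i)

/-- `p` is a singular point of the curve `F`. -/
def IsSing (F : R3 k) (p : Fin 3 → k) : Prop :=
  p ≠ 0 ∧ ∀ i, eval p (pderiv i F) = 0

/-- `p` is an ordinary double point (node) of `F`: singular, and the Hessian has rank 2. -/
def IsNode (F : R3 k) (p : Fin 3 → k) : Prop :=
  IsSing F p ∧ (Matrix.of fun i j => eval p (pderiv i (pderiv j F))).rank = 2

/-- `f` is homogeneous of degree `d`. -/
def IsHomog (f : R3 k) (d : ℕ) : Prop := f ∈ homogeneousSubmodule (Fin 3) k d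

/-- `I` is a homogeneous ideal. -/
def HomogIdeal (I : Ideal (R3 k)) : Prop :=
  ∀ f ∈ I, ∀ d, homogeneousComponent d f ∈ I

/-- `I` is saturated with respect to the irrelevant maximal ideal. -/
def IsSat (I : Ideal (R3 k)) : Prop :=
  ∀ f : R3 k, (∀ i : Fin 3, X i * f ∈ I) → f ∈ I

/-- `{F, G}` is a regular sequence on `R`. -/
def RegPair (F G : R3 k) : Prop :=
  F ≠ 0 ∧ ∀ a : R3 k, G * a ∈ Ideal.span {F} → a ∈ Ideal.span {F}

/-- `J` is obtained from `I` by a basic double link `J = G·I + (F)`. -/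
def BDLStep (I J : Ideal (R3 k)) : Prop :=
  ∃ (F G : R3 k) (d1 d2 : ℕ), F ∈ I ∧ IsHomog F d1 ∧ IsHomog G d2 ∧ RegPair F G ∧
    J = Ideal.span {G} * I ⊔ Ideal.span {F}

/-- The irrelevant maximal ideal `(x₀,x₁,x₂)`. -/
def mIdeal : Ideal (R3 k) := Ideal.span {X 0, X 1, X 2}

/-- `(g, M)` is a graded free resolution `0 → ⊕ R(-d2 j) → ⊕ R(-d1 i) → I → 0`:
the `g i` are homogeneous of degree `d1 i` and generate `I`, the syzygies among the
`g i` are exactly the `R`-combinations of the columns of the homogeneous matrix `M`,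
and the columns of `M` are independent. -/
def GFRes (I : Ideal (R3 k)) {a b : ℕ} (d1 : Fin a → ℕ) (d2 : Fin b → ℕ)
    (g : Fin a → R3 k) (M : Fin a → Fin b → R3 k) : Prop :=
  (∀ i, IsHomog (g i) (d1 i)) ∧
  Ideal.span (Set.range g) = I ∧
  (∀ i j, M i j ≠ 0 → d1 i ≤ d2 j) ∧
  (∀ i j, IsHomog (M i j) (d2 j - d1 i)) ∧
  (∀ v : Fin a → R3 k, (∑ i, v i * g i = 0) ↔ ∃ c : Fin b → R3 k, ∀ i, v i = ∑ j, c j * M i j) ∧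
  (∀ c : Fin b → R3 k, (∀ i, ∑ j, c j * M i j = 0) → c = 0)

/-- The resolution with syzygy matrix `M` is minimal. -/
def MinRes {a b : ℕ} (M : Fin a → Fin b → R3 k) : Prop :=
  ∀ i j, constantCoeff (M i j) = 0

/-- A pseudo type vector `(m 0, …, m (p-1))`. -/
def IsPseudoType (p : ℕ) (m : ℕ → ℕ) : Prop :=
  (∀ i, i < p → 0 < m i) ∧ (∀ i, i + 1 < p → m i ≤ m (i + 1)) ∧
  (∀ i, i + 2 < p → m i = m (i + 1) → m (i + 1) < m (i + 2))

/-- Condition (*): between any two zero entries of `ΔT'` there is an entry `> 1`. -/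
def CondStar (p : ℕ) (m : ℕ → ℕ) : Prop :=
  ∀ i j, i + 1 < p → j + 1 < p → i < j → m i = m (i + 1) → m j = m (j + 1) →
    ∃ l, i + 2 ≤ l ∧ l ≤ j ∧ m (l - 1) + 2 ≤ m l

/-- The `i`-th summand (shifted by `p-1-i`) of the standard O-sequence of a pseudo
type vector, evaluated at `t`. -/
def sTerm (p : ℕ) (m : ℕ → ℕ) (i t : ℕ) : ℕ :=
  let prev : ℕ := if i = 0 then 0 else m (i - 1)
  let next : ℕ := if i + 1 < p then m (i + 1) else m i + 1
  let shift : ℕ := p - 1 - i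
  if m i = next then 0
  else if prev = m i then
    (if t = shift then 1 else if shift < t ∧ t < shift + m i then 2
     else if t = shift + m i then 1 else 0)
  else (if shift ≤ t ∧ t < shift + m i then 1 else 0)

/-- The standard O-sequence associated to a pseudo type vector. -/
def sOS (p : ℕ) (m : ℕ → ℕ) (t : ℕ) : ℕ := ∑ i ∈ Finset.range p, sTerm p m i t

/-- The standard Hilbert function associated to a pseudo type vector. -/
def SHF (p : ℕ) (m : ℕ → ℕ) (t : ℕ) : ℕ := ∑ j ∈ Finset.range (t + 1), sOS p m j

/-- A pseudo linear configuration of type `(m 0, …, m (p-1))` on the lines `ℓ`. -/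
def PseudoConfig (p : ℕ) (m : ℕ → ℕ) (ℓ : ℕ → (Fin 3 → k))
    (Xc : ℕ → Finset (Fin 3 → k)) : Prop :=
  (∀ i, i < p → ℓ i ≠ 0) ∧
  (∀ i j, i < p → j < p → i ≠ j → ¬ SameProj (ℓ i) (ℓ j)) ∧
  (∀ i, i < p → (Xc i).card = m i ∧ GoodPoints (Xc i)) ∧
  (∀ i, i < p → ∀ q ∈ Xc i, onLine (ℓ i) q) ∧
  (∀ i j, i < p → j < p → j ≠ i → ∀ q ∈ Xc i, ¬ onLine (ℓ j) q)

/-- The ideal of a pseudo linear configuration. -/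
def pcRad (p : ℕ) (Xc : ℕ → Finset (Fin 3 → k)) : Ideal (R3 k) :=
  ⨅ i ∈ Finset.range p, radIdeal (Xc i)

/-- A k-configuration of type `(n 0, …, n (r-1))` in `ℙ²`. -/
def KConfig (r : ℕ) (n : Fin r → ℕ) (ℓ : Fin r → (Fin 3 → k))
    (Xc : Fin r → Finset (Fin 3 → k)) : Prop :=
  (∀ i, ℓ i ≠ 0) ∧ (∀ i j, i ≠ j → ¬ SameProj (ℓ i) (ℓ j)) ∧
  (∀ i, (Xc i).card = n i ∧ GoodPoints (Xc i)) ∧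
  (∀ i, ∀ q ∈ Xc i, onLine (ℓ i) q) ∧
  (∀ i j : Fin r, j < i → ∀ q ∈ Xc j, ¬ onLine (ℓ i) q)

/-- A linear configuration of type `(n 0, …, n (r-1))` in `ℙ²`. -/
def LinearConfig (r : ℕ) (n : Fin r → ℕ) (ℓ : Fin r → (Fin 3 → k))
    (Xc : Fin r → Finset (Fin 3 → k)) : Prop :=
  (∀ i, ℓ i ≠ 0) ∧ (∀ i j, i ≠ j → ¬ SameProj (ℓ i) (ℓ j)) ∧
  (∀ i, (Xc i).card = n i ∧ GoodPoints (Xc i)) ∧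
  (∀ i, ∀ q ∈ Xc i, onLine (ℓ i) q) ∧
  (∀ i j, j ≠ i → ∀ q ∈ Xc i, ¬ onLine (ℓ j) q)

/-- The ideal of (the union of the points of) a configuration given by groups. -/
def lcRad {r : ℕ} (Xc : Fin r → Finset (Fin 3 → k)) : Ideal (R3 k) :=
  ⨅ i, radIdeal (Xc i)

/-- The ideal of the double points supported on a configuration given by groups. -/
def lcDbl {r : ℕ} (Xc : Fin r → Finset (Fin 3 → k)) : Ideal (R3 k) :=
  ⨅ i, dblIdeal (Xc i)

/-- Hilbert function of `d` points on a line (with value `0` in negative degrees). -/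
def hl (d : ℕ) (j : ℤ) : ℕ := if j < 0 then 0 else min (j.toNat + 1) d

/-- The Hilbert function associated to a 2-type vector `(n 0 < … < n (r-1))`:
`h(j) = h_r(j) + h_{r-1}(j-1) + ⋯ + h_1(j-(r-1))`. -/
def hT (r : ℕ) (n : Fin r → ℕ) (j : ℕ) : ℕ :=
  ∑ i : Fin r, hl (n i) ((j : ℤ) - ((r - 1 - (i : ℕ) : ℕ) : ℤ))

/-- The associated pseudo type vector of a 2-type vector, as a sorted list:
`(n₁, 2n₁, …, n_r, 2n_r)` in nondecreasing order. -/
def assocList (r : ℕ) (n : Fin r → ℕ) : List ℕ :=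
  List.insertionSort (· ≤ ·) (List.ofFn n ++ List.ofFn fun i => 2 * n i)

/-- The associated pseudo type vector as a function. -/
def assocPTV (r : ℕ) (n : Fin r → ℕ) : ℕ → ℕ := fun j => (assocList r n).getD j 0

namespace DblAux
open MvPolynomial

variable {k : Type} [Field k]

local notation "H" => homogeneousSubmodule (Fin 3) k

lemma degree_eq_sum (d : Fin 3 →₀ ℕ) : d.degree = ∑ i : Fin 3, d i := by
  rw [Finsupp.degree_apply]
  exact Finset.sum_subset (Finset.subset_univ _)
    (fun i _ hi => by simpa using (Finsupp.notMem_support_iff.mp hi))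

lemma mem_H_degree {n : ℕ} {f : R3 k} (hf : f ∈ H n) {d : Fin 3 →₀ ℕ}
    (hd : d ∈ f.support) : d.degree = n := by
  rw [mem_homogeneousSubmodule] at hf
  by_contra h
  exact (mem_support_iff.mp hd) (hf.coeff_eq_zero h)

lemma eval_smul_homog {n : ℕ} {f : R3 k} (hf : f ∈ H n) (c : k) (x : Fin 3 → k) :
    eval (c • x) f = c ^ n * eval x f := by
  conv_lhs => rw [f.as_sum]
  conv_rhs => rw [f.as_sum]
  rw [map_sum, map_sum, Finset.mul_sum]
  refine Finset.sum_congr rfl fun d hd => ?_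
  have hdeg : d.degree = n := mem_H_degree hf hd
  rw [eval_monomial, eval_monomial, Finsupp.prod, Finsupp.prod]
  simp only [Pi.smul_apply, smul_eq_mul, mul_pow, Finset.prod_mul_distrib,
    Finset.prod_pow_eq_pow_sum]
  rw [← Finsupp.degree_apply, hdeg]; ring

lemma pderiv_mem_homog {n : ℕ} {f : R3 k} (hf : f ∈ H n) (i : Fin 3) :
    pderiv i f ∈ H (n - 1) := by
  rw [show pderiv i f = ∑ d ∈ f.support, pderiv i (monomial d (coeff d f)) by
    rw [← map_sum, ← f.as_sum]]
  apply Submodule.sum_mem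
  intro d hd
  rw [pderiv_monomial]
  by_cases h0 : d i = 0
  · simp [h0]
  · rw [mem_homogeneousSubmodule]
    apply isHomogeneous_monomial
    have hdeg : d.degree = n := mem_H_degree hf hd
    rw [degree_eq_sum] at hdeg ⊢
    rw [Fin.sum_univ_three] at hdeg ⊢
    simp only [Finsupp.tsub_apply, Finsupp.single_apply]
    fin_cases i <;> simp_all <;> omega

lemma euler {n : ℕ} {f : R3 k} (hf : f ∈ H n) :
    ∑ i : Fin 3, X i * pderiv i f = C (n : k) * f := by
  conv_rhs => rw [f.as_sum]
  have : ∀ i : Fin 3, X i * pderiv i f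
      = ∑ d ∈ f.support, X (R := k) i * pderiv i (monomial d (coeff d f)) := by
    intro i; rw [← Finset.mul_sum, ← map_sum, ← f.as_sum]
  simp only [this]
  rw [Finset.sum_comm, Finset.mul_sum]
  refine Finset.sum_congr rfl fun d hd => ?_
  have hdeg : d.degree = n := mem_H_degree hf hd
  have key : ∀ i : Fin 3, X (R := k) i * pderiv i (monomial d (coeff d f))
      = monomial d (coeff d f * (d i : k)) := by
    intro i
    rw [pderiv_monomial]
    by_cases h0 : d i = 0
    · simp [h0]
    · have hsum : Finsupp.single i 1 + (d - Finsupp.single i 1) = d := by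
        ext j
        simp only [Finsupp.add_apply, Finsupp.tsub_apply, Finsupp.single_apply]
        rcases eq_or_ne i j with rfl | hij
        · simp only [if_pos rfl, if_true]; omega
        · simp [hij]
      rw [X, monomial_mul, hsum, one_mul]
  simp only [key, ← map_sum]
  rw [C_mul_monomial]
  congr 1
  rw [← Finset.mul_sum, ← Nat.cast_sum, ← degree_eq_sum, hdeg, mul_comm]

lemma euler_eval {n : ℕ} {f : R3 k} (hf : f ∈ H n) (x : Fin 3 → k) :
    ∑ i : Fin 3, x i * eval x (pderiv i f) = (n : k) * eval x f := by
  have h := congrArg (eval x) (euler hf)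
  simpa using h

lemma mem_vIdeal {S : Set (Fin 3 → k)} {f : R3 k} :
    f ∈ vIdeal S ↔ ∀ x ∈ S, eval x f = 0 := Iff.rfl

lemma eval_eq_zero_of_mem {q : Fin 3 → k} {g : R3 k} (hg : g ∈ pointIdeal q) :
    eval q g = 0 := hg q ⟨1, (one_smul k q).symm⟩

lemma mem_pointIdeal_iff {n : ℕ} {f : R3 k} (hf : f ∈ H n) (q : Fin 3 → k) :
    f ∈ pointIdeal q ↔ eval q f = 0 := by
  constructor
  · exact fun h => eval_eq_zero_of_mem h
  · rintro h x ⟨c, rfl⟩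
    rw [eval_smul_homog hf, h, mul_zero]

lemma pointIdeal_smul (q : Fin 3 → k) {c : k} (hc : c ≠ 0) :
    pointIdeal (c • q) = pointIdeal q := by
  unfold pointIdeal
  congr 1
  ext x
  constructor
  · rintro ⟨e, rfl⟩; exact ⟨e * c, by rw [mul_smul]⟩
  · rintro ⟨e, rfl⟩
    exact ⟨e * c⁻¹, by rw [smul_smul, mul_assoc, inv_mul_cancel₀ hc, mul_one]⟩

lemma sq_deriv_zero {q : Fin 3 → k} {f : R3 k} (hf : f ∈ (pointIdeal q) ^ 2) (i : Fin 3) :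
    eval q (pderiv i f) = 0 := by
  rw [pow_two] at hf
  refine Submodule.mul_induction_on hf ?_ ?_
  · intro a ha b hb
    rw [pderiv_mul]
    simp [eval_eq_zero_of_mem ha, eval_eq_zero_of_mem hb]
  · intro a b ha hb; simp [ha, hb]

lemma lin_mem {q : Fin 3 → k} {j : Fin 3} (hj : q j = 1) (a : Fin 3) :
    (X a - C (q a) * X j : R3 k) ∈ pointIdeal q := by
  rintro x ⟨c, rfl⟩
  simp only [map_sub, map_mul, eval_C, eval_X, Pi.smul_apply, smul_eq_mul, hj]
  ring

lemma sub_aeval_mem {q : Fin 3 → k} {j : Fin 3} (hj : q j = 1) (f : R3 k) :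
    f - aeval (fun a : Fin 3 => C (q a) * X j) f ∈ pointIdeal q := by
  induction f using MvPolynomial.induction_on with
  | C a => simp only [aeval_C, MvPolynomial.algebraMap_eq, sub_self]; exact zero_mem _
  | add p p' hp hp' =>
    have : p + p' - aeval (fun a : Fin 3 => C (q a) * X j) (p + p')
        = (p - aeval (fun a : Fin 3 => C (q a) * X j) p)
          + (p' - aeval (fun a : Fin 3 => C (q a) * X j) p') := by
      rw [map_add]; ring
    rw [this]; exact add_mem hp hp'
  | mul_X p i hp =>
    have : p * X i - aeval (fun a : Fin 3 => C (q a) * X j) (p * X i)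
        = X i * (p - aeval (fun a : Fin 3 => C (q a) * X j) p)
          + aeval (fun a : Fin 3 => C (q a) * X j) p * (X i - C (q i) * X j) := by
      rw [map_mul, aeval_X]; ring
    rw [this]
    exact add_mem (Ideal.mul_mem_left _ _ hp) (Ideal.mul_mem_left _ _ (lin_mem hj i))

lemma aeval_line (q : Fin 3 → k) (j : Fin 3) {m : ℕ} {p : R3 k} (hp : p ∈ H m) :
    aeval (fun a : Fin 3 => C (q a) * X j) p = C (eval q p) * X j ^ m := by
  conv_lhs => rw [p.as_sum]
  rw [map_sum]
  have : (C (eval q p) * X j ^ m : R3 k)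
      = ∑ d ∈ p.support, C (eval q (monomial d (coeff d p))) * X j ^ m := by
    rw [← Finset.sum_mul, ← map_sum, ← map_sum, ← p.as_sum]
  rw [this]
  refine Finset.sum_congr rfl fun d hd => ?_
  have hdeg := mem_H_degree hp hd
  rw [aeval_monomial, eval_monomial, Finsupp.prod, Finsupp.prod]
  simp only [mul_pow, Finset.prod_mul_distrib, Finset.prod_pow_eq_pow_sum]
  rw [← Finsupp.degree_apply, hdeg]
  simp only [MvPolynomial.algebraMap_eq, ← C_pow, ← map_prod (C : k →+* R3 k), ← C_mul,
    mul_assoc]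
  rw [← mul_assoc, ← C_mul]

lemma taylor_mem {q : Fin 3 → k} {j : Fin 3} (hj : q j = 1) (f : R3 k) :
    f - (aeval (fun a : Fin 3 => C (q a) * X j) f
      + ∑ a : Fin 3, aeval (fun a : Fin 3 => C (q a) * X j) (pderiv a f)
          * (X a - C (q a) * X j)) ∈ (pointIdeal q) ^ 2 := by
  set g : Fin 3 → R3 k := fun a => C (q a) * X j with hg
  induction f using MvPolynomial.induction_on with
  | C c =>
    simp only [aeval_C, MvPolynomial.algebraMap_eq, pderiv_C, map_zero, zero_mul,
      Finset.sum_const_zero, add_zero, sub_self]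
    exact zero_mem _
  | add p p' hp hp' =>
    have : p + p' - (aeval g (p + p')
          + ∑ a : Fin 3, aeval g (pderiv a (p + p')) * (X a - C (q a) * X j))
        = (p - (aeval g p + ∑ a : Fin 3, aeval g (pderiv a p) * (X a - C (q a) * X j)))
          + (p' - (aeval g p' + ∑ a : Fin 3, aeval g (pderiv a p') * (X a - C (q a) * X j))) := by
      simp only [map_add, add_mul, Finset.sum_add_distrib]
      ring
    rw [this]; exact add_mem hp hp'
  | mul_X p i hp =>
    have hXi : ∀ a : Fin 3, aeval g (pderiv a (p * X i))
        = aeval g (pderiv a p) * (C (q i) * X j) + (if a = i then aeval g p else 0) := by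
      intro a
      rw [pderiv_mul]
      rcases eq_or_ne a i with rfl | h
      · rw [pderiv_X_self, mul_one, map_add, map_mul, aeval_X, if_pos rfl]
      · rw [pderiv_X_of_ne (Ne.symm h), mul_zero, add_zero, map_mul, aeval_X, if_neg h,
          add_zero]
    have hsum : ∑ a : Fin 3, aeval g (pderiv a (p * X i)) * (X a - C (q a) * X j)
        = (C (q i) * X j) * (∑ a : Fin 3, aeval g (pderiv a p) * (X a - C (q a) * X j))
          + aeval g p * (X i - C (q i) * X j) := by
      have hterm : ∀ a : Fin 3, aeval g (pderiv a (p * X i)) * (X a - C (q a) * X j)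
          = (aeval g (pderiv a p) * (X a - C (q a) * X j)) * (C (q i) * X j)
            + (if a = i then aeval g p * (X i - C (q i) * X j) else 0) := by
        intro a
        rw [hXi a, add_mul, ite_mul, zero_mul]
        rcases eq_or_ne a i with rfl | h
        · simp only [if_pos rfl]; ring
        · simp only [if_neg h]; ring
      rw [Finset.sum_congr rfl fun a _ => hterm a, Finset.sum_add_distrib,
        Finset.sum_ite_eq' Finset.univ i, if_pos (Finset.mem_univ i), ← Finset.sum_mul]
      ring
    have key : p * X i - (aeval g (p * X i)
          + ∑ a : Fin 3, aeval g (pderiv a (p * X i)) * (X a - C (q a) * X j))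
        = (C (q i) * X j) * (p - (aeval g p
            + ∑ a : Fin 3, aeval g (pderiv a p) * (X a - C (q a) * X j)))
          + (X i - C (q i) * X j) * (p - aeval g p) := by
      rw [hsum, map_mul, aeval_X]
      ring
    rw [key]
    refine add_mem (Ideal.mul_mem_left _ _ hp) ?_
    rw [pow_two]
    exact Ideal.mul_mem_mul (lin_mem hj i) (sub_aeval_mem hj p)

lemma homog_mem_sq {q : Fin 3 → k} {j : Fin 3} (hj : q j = 1) {n : ℕ} {f : R3 k}
    (hf : f ∈ H n) (h0 : eval q f = 0) (hd : ∀ i, eval q (pderiv i f) = 0) :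
    f ∈ (pointIdeal q) ^ 2 := by
  have key := taylor_mem hj f
  rw [aeval_line q j hf, h0, map_zero, zero_mul] at key
  have : ∀ a : Fin 3, aeval (fun a : Fin 3 => C (q a) * X j) (pderiv a f)
      * (X a - C (q a) * X j) = 0 := by
    intro a
    rw [aeval_line q j (pderiv_mem_homog hf a), hd a, map_zero, zero_mul, zero_mul]
  rw [Finset.sum_congr rfl fun a _ => this a] at key
  simpa using key

lemma mem_sq_iff_derivs [CharZero k] {q : Fin 3 → k} (hq : q ≠ 0) {n : ℕ} (hn : n ≠ 0)
    {f : R3 k} (hf : f ∈ H n) :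
    f ∈ (pointIdeal q) ^ 2 ↔ ∀ i, eval q (pderiv i f) = 0 := by
  constructor
  · exact fun h i => sq_deriv_zero h i
  · intro h
    obtain ⟨j, hj⟩ : ∃ j, q j ≠ 0 := by
      by_contra hc; push_neg at hc; exact hq (funext hc)
    have hne : ((q j)⁻¹ : k) ≠ 0 := inv_ne_zero hj
    set q' := (q j)⁻¹ • q with hq'
    have hij : q' j = 1 := by
      simp [hq', inv_mul_cancel₀ hj]
    have hpt : pointIdeal q' = pointIdeal q := pointIdeal_smul q hne
    have hd' : ∀ i, eval q' (pderiv i f) = 0 := fun i => by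
      rw [hq', eval_smul_homog (pderiv_mem_homog hf i), h i, mul_zero]
    have h0' : eval q' f = 0 := by
      have he := euler_eval hf q'
      rw [Finset.sum_congr rfl fun i _ => by rw [hd' i, mul_zero]] at he
      rw [Finset.sum_const_zero] at he
      have hcast : ((n : k)) ≠ 0 := Nat.cast_ne_zero.2 hn
      field_simp at he
      exact (mul_eq_zero.mp he.symm).resolve_left hcast
    rw [← hpt]
    exact homog_mem_sq hij hf h0' hd'

instance finiteDimensional_H (t : ℕ) : FiniteDimensional k (H t) := by
  haveI : Finite {d : Fin 3 →₀ ℕ | d.degree ≤ t} := (Finsupp.finite_of_degree_le t).to_subtype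
  haveI : Fintype {d : Fin 3 →₀ ℕ | d.degree ≤ t} := Fintype.ofFinite _
  let φ : ↥(H t) →ₗ[k] ({d : Fin 3 →₀ ℕ | d.degree ≤ t} → k) :=
    { toFun := fun f d => coeff d.1 f.1
      map_add' := by intros; ext d; simp
      map_smul' := by intros; ext d; simp }
  refine FiniteDimensional.of_injective φ ?_
  intro f g hfg
  ext1
  apply MvPolynomial.ext
  intro d
  by_cases hd : d.degree ≤ t
  · exact congrFun hfg ⟨d, hd⟩
  · push_neg at hd
    have hfz := ((mem_homogeneousSubmodule t (f : R3 k)).mp f.2).coeff_eq_zero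
      (d := d) (by omega)
    have hgz := ((mem_homogeneousSubmodule t (g : R3 k)).mp g.2).coeff_eq_zero
      (d := d) (by omega)
    rw [hfz, hgz]

variable (Xs : Finset (Fin 3 → k))

/-- Evaluation of degree-`t` forms at the points. -/
def evMap (t : ℕ) : ↥(H t) →ₗ[k] (↥Xs → k) where
  toFun f := fun q => eval (q : Fin 3 → k) (f : R3 k)
  map_add' := by intros; ext q; simp
  map_smul' := by intros; ext q; simp [smul_eval]

/-- Gradient evaluation of degree-`t` forms at the points. -/
def phiMap (t : ℕ) : ↥(H t) →ₗ[k] (↥Xs → Fin 3 → k) where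
  toFun f := fun q i => eval (q : Fin 3 → k) (pderiv i (f : R3 k))
  map_add' := by intros; ext q i; simp
  map_smul' := by intros; ext q i; simp [smul_eval]

lemma mem_radIdeal_iff {n : ℕ} {f : R3 k} (hf : f ∈ H n) :
    f ∈ radIdeal Xs ↔ ∀ q ∈ Xs, eval q f = 0 := by
  simp only [radIdeal, Ideal.mem_iInf]
  exact forall_congr' fun q => forall_congr' fun hq => mem_pointIdeal_iff hf q

lemma mem_dblIdeal_iff [CharZero k] (hX : GoodPoints Xs) {n : ℕ} (hn : n ≠ 0)
    {f : R3 k} (hf : f ∈ H n) :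
    f ∈ dblIdeal Xs ↔ ∀ q ∈ Xs, ∀ i, eval q (pderiv i f) = 0 := by
  simp only [dblIdeal, Ideal.mem_iInf]
  exact forall_congr' fun q => forall_congr' fun hq =>
    mem_sq_iff_derivs (hX.1 q hq) hn hf

set_option synthInstance.maxHeartbeats 1000000 in
set_option maxHeartbeats 1000000 in
lemma hilb_rank (I : Ideal (R3 k)) (t : ℕ) {V : Type} [AddCommGroup V] [Module k V]
    (φ : ↥(H t) →ₗ[k] V)
    (hker : ∀ f : ↥(H t), φ f = 0 ↔ (f : R3 k) ∈ I) :
    hilb I t = Module.finrank k ↥(LinearMap.range φ) := by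
  have h1 : LinearMap.ker φ
      = Submodule.comap (H t).subtype (Submodule.restrictScalars k I) := by
    ext f
    simp only [LinearMap.mem_ker, Submodule.mem_comap, Submodule.restrictScalars_mem,
      Submodule.subtype_apply]
    exact hker f
  have h2 : Submodule.map (H t).subtype (LinearMap.ker φ)
      = Submodule.restrictScalars k I ⊓ (H t) := by
    rw [h1, Submodule.map_comap_subtype, inf_comm]
  have h3 : Module.finrank k ↥(Submodule.restrictScalars k I ⊓ H t)
      = Module.finrank k ↥(LinearMap.ker φ) := by
    rw [← h2]
    exact (Submodule.equivMapOfInjective (H t).subtype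
      (Submodule.injective_subtype _) (LinearMap.ker φ)).symm.finrank_eq
  have h4 := LinearMap.finrank_range_add_finrank_ker φ
  have h5 : Module.finrank k ↥(LinearMap.ker φ) ≤ Module.finrank k ↥(H t) := by omega
  unfold hilb
  rw [h3]
  omega

lemma linForm_mem_H1 (a : Fin 3 → k) : linForm a ∈ H 1 := by
  unfold linForm
  exact Submodule.sum_mem _ fun i _ =>
    (mem_homogeneousSubmodule _ _).mpr (isHomogeneous_C_mul_X _ _)

lemma eval_linForm (a x : Fin 3 → k) : eval x (linForm a) = ∑ i, a i * x i := by
  unfold linForm; simp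

lemma linForm_ne_zero {q : Fin 3 → k} (hq : q ≠ 0) : linForm (k := k) q ≠ 0 := by
  intro h
  apply hq
  funext i
  have h2 := congrArg (eval (fun l => if l = i then (1:k) else 0)) h
  rw [eval_linForm, map_zero] at h2
  simpa [mul_ite, Finset.sum_ite_eq'] using h2

lemma mul_linForm_mem {t : ℕ} (a : Fin 3 → k) (f : R3 k) (hf : f ∈ H t) :
    linForm a * f ∈ H (t + 1) := by
  have h := ((mem_homogeneousSubmodule _ _).mp (linForm_mem_H1 a)).mul
    ((mem_homogeneousSubmodule _ _).mp hf)
  rw [mem_homogeneousSubmodule]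
  simpa [Nat.add_comm] using h

lemma exists_good_lin [CharZero k] (hX : GoodPoints Xs) :
    ∃ a : Fin 3 → k, ∀ q ∈ Xs, (∑ i, a i * q i) ≠ 0 := by
  by_contra hc
  push_neg at hc
  have hP : (∏ q ∈ Xs, linForm q : R3 k) ≠ 0 :=
    Finset.prod_ne_zero_iff.mpr fun q hq => linForm_ne_zero (hX.1 q hq)
  apply hP
  apply MvPolynomial.funext (q := 0)
  intro x
  obtain ⟨q, hq, h0⟩ := hc x
  rw [map_zero, map_prod]
  refine Finset.prod_eq_zero hq ?_
  rw [eval_linForm]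
  rw [Finset.sum_congr rfl fun i _ => mul_comm (q i) (x i)]
  exact h0

/-- Diagonal multiplication operator on functions on the points. -/
def diagL (w : ↥Xs → k) : (↥Xs → k) →ₗ[k] (↥Xs → k) where
  toFun v := fun q => w q * v q
  map_add' := by intros; funext q; simp [mul_add]
  map_smul' := by intros; funext q; simp only [Pi.smul_apply, smul_eq_mul,
    RingHom.id_apply]; ring

lemma diagL_apply (w v : ↥Xs → k) (q : ↥Xs) : diagL Xs w v q = w q * v q := rfl

/-- The range of the degree-`t` evaluation map. -/
def Vs (t : ℕ) : Submodule k (↥Xs → k) := LinearMap.range (evMap Xs t)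

lemma evMap_apply (t : ℕ) (f : ↥(H t)) (q : ↥Xs) :
    evMap Xs t f q = eval (q : Fin 3 → k) (f : R3 k) := rfl

lemma mapDa_le (a : Fin 3 → k) (t : ℕ) :
    Submodule.map (diagL Xs fun q => ∑ i, a i * q.1 i) (Vs Xs t) ≤ Vs Xs (t+1) := by
  rintro v ⟨u, ⟨f, rfl⟩, rfl⟩
  refine ⟨⟨linForm a * f.1, mul_linForm_mem a f.1 f.2⟩, ?_⟩
  funext q
  rw [evMap_apply, diagL_apply, evMap_apply]
  simp [eval_linForm]

lemma diag_coord (i : Fin 3) :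
    (fun q : ↥Xs => ∑ l, (Pi.single i 1 : Fin 3 → k) l * q.1 l)
      = fun q : ↥Xs => q.1 i := by
  funext q
  simp [Pi.single_apply, ite_mul, Finset.sum_ite_eq']

lemma mapDi_le (i : Fin 3) (t : ℕ) :
    Submodule.map (diagL Xs fun q => q.1 i) (Vs Xs t) ≤ Vs Xs (t+1) := by
  have := mapDa_le Xs (Pi.single i (1:k)) t
  rwa [diag_coord] at this

lemma Vs_succ [CharZero k] (t : ℕ) :
    Vs Xs (t+1) = ⨆ i : Fin 3, Submodule.map (diagL Xs fun q => q.1 i) (Vs Xs t) := by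
  apply le_antisymm
  · rintro v ⟨f, rfl⟩
    have hc : ((t+1 : ℕ) : k) ≠ 0 := Nat.cast_ne_zero.2 (Nat.succ_ne_zero t)
    have hgmem : ∀ i : Fin 3, ((t+1 : ℕ) : k)⁻¹ • pderiv i f.1 ∈ H t := fun i => by
      have h := pderiv_mem_homog f.2 i
      simpa using Submodule.smul_mem _ _ h
    have hdec : evMap Xs (t+1) f = ∑ i : Fin 3,
        (diagL Xs fun q => q.1 i) (evMap Xs t ⟨_, hgmem i⟩) := by
      funext q
      rw [evMap_apply]
      have he := euler_eval f.2 (q : Fin 3 → k)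
      have : ∀ i : Fin 3, ((diagL Xs fun q => q.1 i) (evMap Xs t ⟨_, hgmem i⟩)) q
          = ((t+1 : ℕ) : k)⁻¹ * ((q : Fin 3 → k) i
              * eval (q : Fin 3 → k) (pderiv i f.1)) := by
        intro i
        rw [diagL_apply, evMap_apply]
        simp only [smul_eval]
        ring
      rw [Finset.sum_apply, Finset.sum_congr rfl fun i _ => this i, ← Finset.mul_sum, he,
        ← mul_assoc, inv_mul_cancel₀ hc, one_mul]
    rw [hdec]
    exact Submodule.sum_mem _ fun i _ => Submodule.mem_iSup_of_mem i
      ⟨evMap Xs t ⟨_, hgmem i⟩, ⟨_, rfl⟩, rfl⟩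
  · exact iSup_le fun i => mapDi_le Xs i t

lemma map_diag_comm (w w' : ↥Xs → k) (W : Submodule k (↥Xs → k)) :
    Submodule.map (diagL Xs w) (Submodule.map (diagL Xs w') W)
      = Submodule.map (diagL Xs w') (Submodule.map (diagL Xs w) W) := by
  rw [← Submodule.map_comp, ← Submodule.map_comp]
  congr 1
  refine LinearMap.ext fun v => ?_
  funext q
  simp only [LinearMap.comp_apply, diagL_apply]
  ring

lemma map_diag_top {w : ↥Xs → k} (hw : ∀ q, w q ≠ 0) {W : Submodule k (↥Xs → k)}
    (h : Submodule.map (diagL Xs w) W = ⊤) : W = ⊤ := by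
  rw [eq_top_iff]
  intro v _
  have hv : diagL Xs w v ∈ Submodule.map (diagL Xs w) W := h ▸ Submodule.mem_top
  obtain ⟨u, hu, huv⟩ := hv
  have huv' : u = v := by
    funext q
    exact mul_left_cancel₀ (hw q) (congrFun huv q)
  rwa [← huv']

lemma map_diag_finrank {w : ↥Xs → k} (hw : ∀ q, w q ≠ 0) (W : Submodule k (↥Xs → k)) :
    Module.finrank k ↥(Submodule.map (diagL Xs w) W) = Module.finrank k ↥W := by
  let e : (↥Xs → k) ≃ₗ[k] (↥Xs → k) :=
    LinearEquiv.ofLinear (diagL Xs w) (diagL Xs fun q => (w q)⁻¹)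
      (by refine LinearMap.ext fun v => ?_; funext q
          simp only [LinearMap.comp_apply, diagL_apply, LinearMap.id_apply]
          rw [← mul_assoc, mul_inv_cancel₀ (hw q), one_mul])
      (by refine LinearMap.ext fun v => ?_; funext q
          simp only [LinearMap.comp_apply, diagL_apply, LinearMap.id_apply]
          rw [← mul_assoc, inv_mul_cancel₀ (hw q), one_mul])
  have hco : (e : (↥Xs → k) →ₗ[k] (↥Xs → k)) = diagL Xs w := rfl
  rw [← hco]
  exact LinearEquiv.finrank_map_eq e W

lemma exists_sep {p q : Fin 3 → k} (hp : p ≠ 0) (hq : q ≠ 0) (hnp : ¬ SameProj p q) :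
    ∃ a : Fin 3 → k, (∑ i, a i * p i) = 0 ∧ (∑ i, a i * q i) ≠ 0 := by
  by_contra hc
  push_neg at hc
  obtain ⟨j, hj⟩ : ∃ j, p j ≠ 0 := by
    by_contra hcon; push_neg at hcon; exact hp (funext hcon)
  set a0 : Fin 3 → k := fun i => if i = j then (p j)⁻¹ else 0 with ha0
  have h1 : ∑ i, a0 i * p i = 1 := by
    rw [ha0]
    simp only [ite_mul, zero_mul, Finset.sum_ite_eq', Finset.mem_univ, if_pos]
    exact inv_mul_cancel₀ hj
  set c : k := ∑ i, a0 i * q i with hcq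
  have key : ∀ a : Fin 3 → k, ∑ i, a i * q i = (∑ i, a i * p i) * c := by
    intro a
    set s : k := ∑ i, a i * p i with hs
    have hz : ∑ i, (a i - s * a0 i) * p i = 0 := by
      simp only [sub_mul, Finset.sum_sub_distrib]
      rw [show ∑ i, s * a0 i * p i = s * ∑ i, a0 i * p i by
        rw [Finset.mul_sum]; exact Finset.sum_congr rfl fun i _ => by ring]
      rw [h1, mul_one, ← hs, sub_self]
    have h2 := hc _ hz
    simp only [sub_mul, Finset.sum_sub_distrib] at h2
    rw [show ∑ i, s * a0 i * q i = s * c by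
      rw [hcq, Finset.mul_sum]; exact Finset.sum_congr rfl fun i _ => by ring] at h2
    have := sub_eq_zero.mp h2
    rw [this, mul_comm]
  have hqc : q = c • p := by
    funext i
    have h3 := key (fun l => if l = i then 1 else 0)
    simp only [ite_mul, one_mul, zero_mul, Finset.sum_ite_eq', Finset.mem_univ,
      if_pos] at h3
    rw [h3]
    simp [mul_comm]
  have hc0 : c ≠ 0 := by
    intro h; exact hq (by rw [hqc, h, zero_smul])
  exact hnp ⟨c, hc0, hqc⟩

lemma ev_surj_big (hX : GoodPoints Xs) {t : ℕ} (ht : Xs.card - 1 ≤ t) :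
    Vs Xs t = ⊤ := by
  classical
  have hsep : ∀ q0 : ↥Xs, ∃ f : R3 k, f ∈ H t ∧ eval (q0 : Fin 3 → k) f ≠ 0 ∧
      ∀ q : ↥Xs, q ≠ q0 → eval (q : Fin 3 → k) f = 0 := by
    intro q0
    have hap : ∀ p ∈ Xs.erase q0.1, ∃ a : Fin 3 → k,
        (∑ i, a i * p i) = 0 ∧ (∑ i, a i * q0.1 i) ≠ 0 := by
      intro p hp
      have hpX := Finset.mem_of_mem_erase hp
      have hpq : p ≠ q0.1 := Finset.ne_of_mem_erase hp
      exact exists_sep (hX.1 p hpX) (hX.1 q0.1 q0.2) (hX.2 p hpX q0.1 q0.2 hpq)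
    choose aa haa using hap
    obtain ⟨j, hj⟩ : ∃ j, q0.1 j ≠ 0 := by
      by_contra hcon; push_neg at hcon; exact hX.1 q0.1 q0.2 (funext hcon)
    refine ⟨(∏ p ∈ (Xs.erase q0.1).attach, linForm (aa p.1 p.2))
      * (X j) ^ (t - (Xs.card - 1)), ?_, ?_, ?_⟩
    · have hcard : (Xs.erase q0.1).card = Xs.card - 1 := Finset.card_erase_of_mem q0.2
      have h1 : (∏ p ∈ (Xs.erase q0.1).attach, linForm (aa p.1 p.2)).IsHomogeneous
          (Xs.card - 1) := by
        have h2 := MvPolynomial.IsHomogeneous.prod (Finset.attach (Xs.erase q0.1))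
          (fun p => linForm (aa p.1 p.2)) (fun _ => 1)
          (fun p _ => (mem_homogeneousSubmodule _ _).mp (linForm_mem_H1 _))
        simpa [Finset.card_attach, hcard] using h2
      rw [mem_homogeneousSubmodule]
      have h3 := h1.mul (isHomogeneous_X_pow (R := k) j (t - (Xs.card - 1)))
      have harith : (Xs.card - 1) + (t - (Xs.card - 1)) = t := by omega
      rwa [harith] at h3
    · rw [map_mul, map_prod, map_pow, eval_X]
      apply mul_ne_zero
      · exact Finset.prod_ne_zero_iff.mpr fun p _ => by
          rw [eval_linForm]; exact (haa p.1 p.2).2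
      · exact pow_ne_zero _ hj
    · intro q hqne
      have hqe : q.1 ∈ Xs.erase q0.1 :=
        Finset.mem_erase.mpr ⟨fun h => hqne (Subtype.ext h), q.2⟩
      rw [map_mul, map_prod]
      apply mul_eq_zero_of_left
      exact Finset.prod_eq_zero (Finset.mem_attach _ ⟨q.1, hqe⟩)
        (by rw [eval_linForm]; exact (haa q.1 hqe).1)
  choose F hF1 hF2 hF3 using hsep
  rw [eq_top_iff]
  intro v _
  refine ⟨⟨∑ q0 : ↥Xs, C (v q0 * (eval (q0 : Fin 3 → k) (F q0))⁻¹) * F q0, ?_⟩, ?_⟩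
  · exact Submodule.sum_mem _ fun q0 _ => by
      rw [← smul_eq_C_mul]; exact Submodule.smul_mem _ _ (hF1 q0)
  · funext q
    rw [evMap_apply]
    simp only [map_sum, map_mul, eval_C]
    rw [Finset.sum_eq_single q]
    · rw [mul_assoc, inv_mul_cancel₀ (hF2 q), mul_one]
    · intro q0 _ hne
      rw [hF3 q0 q (Ne.symm hne), mul_zero]
    · intro h; exact absurd (Finset.mem_univ q) h

lemma ev_r_surjective [CharZero k] (hX : GoodPoints Xs) (r : ℕ)
    (hrk : Module.finrank k ↥(Vs Xs (r+1)) = Module.finrank k ↥(Vs Xs r)) :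
    Vs Xs r = ⊤ := by
  obtain ⟨a, ha⟩ := exists_good_lin Xs hX
  set w : ↥Xs → k := fun q => ∑ i, a i * q.1 i with hw
  have hw0 : ∀ q : ↥Xs, w q ≠ 0 := fun q => ha q.1 q.2
  have hbase : Vs Xs (r+1) = Submodule.map (diagL Xs w) (Vs Xs r) := by
    refine (Submodule.eq_of_le_of_finrank_le (mapDa_le Xs a r) ?_).symm
    rw [map_diag_finrank Xs hw0, hrk]
  have hstep : ∀ s : ℕ, Vs Xs (r+s+1) = Submodule.map (diagL Xs w) (Vs Xs (r+s)) := by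
    intro s
    induction s with
    | zero => exact hbase
    | succ s ih =>
      have e1 : r + (s+1) + 1 = (r+s+1) + 1 := by ring
      have e2 : r + (s+1) = (r+s) + 1 := by ring
      rw [e1, Vs_succ, ih, e2, Vs_succ, Submodule.map_iSup]
      exact iSup_congr fun i => map_diag_comm Xs _ _ _
  have hdown : ∀ s, Vs Xs (r+s) = ⊤ → Vs Xs r = ⊤ := by
    intro s
    induction s with
    | zero => exact fun h => h
    | succ s ih =>
      intro h
      apply ih
      apply map_diag_top Xs hw0
      rw [← hstep s]
      rw [show r + s + 1 = r + (s+1) by ring]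
      exact h
  exact hdown (Xs.card + 1) (ev_surj_big Xs hX (by omega))

lemma hilb_rad_eq (t : ℕ) : hilb (radIdeal Xs) t = Module.finrank k ↥(Vs Xs t) := by
  apply hilb_rank
  intro f
  rw [mem_radIdeal_iff Xs f.2]
  constructor
  · intro h q hq
    have := congrFun h ⟨q, hq⟩
    rwa [evMap_apply] at this
  · intro h
    funext q
    rw [evMap_apply]
    exact h q.1 q.2

lemma exists_separator [CharZero k] (hX : GoodPoints Xs) (r : ℕ)
    (hreg : regC (radIdeal Xs) = r + 1) (q0 : ↥Xs) :
    ∃ F : R3 k, F ∈ H r ∧ eval (q0 : Fin 3 → k) F = 1 ∧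
      ∀ q : ↥Xs, q ≠ q0 → eval (q : Fin 3 → k) F = 0 := by
  classical
  have hS : {t | 0 < t ∧ hilb (radIdeal Xs) t = hilb (radIdeal Xs) (t-1)}.Nonempty := by
    by_contra h
    rw [Set.not_nonempty_iff_eq_empty] at h
    rw [regC, h, Nat.sInf_empty] at hreg
    omega
  have hmem := Nat.sInf_mem hS
  rw [← regC, hreg] at hmem
  obtain ⟨-, heq⟩ := hmem
  rw [show r + 1 - 1 = r from rfl] at heq
  rw [hilb_rad_eq, hilb_rad_eq] at heq
  have htop := ev_r_surjective Xs hX r heq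
  have hmem2 : Pi.single q0 (1:k) ∈ Vs Xs r := htop ▸ Submodule.mem_top
  obtain ⟨f, hf⟩ := hmem2
  refine ⟨f.1, f.2, ?_, ?_⟩
  · have h2 := congrFun hf q0
    rw [evMap_apply] at h2
    rw [h2, Pi.single_eq_same]
  · intro q hq
    have h2 := congrFun hf q
    rw [evMap_apply] at h2
    rw [h2, Pi.single_eq_of_ne hq]

lemma pderiv_linForm (a : Fin 3 → k) (i : Fin 3) : pderiv i (linForm a) = C (a i) := by
  unfold linForm
  rw [map_sum, Finset.sum_eq_single i]
  · rw [pderiv_C_mul, pderiv_X_self, mul_one]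
  · intro l _ hl
    rw [pderiv_C_mul, pderiv_X_of_ne hl, mul_zero]
  · intro h; exact absurd (Finset.mem_univ i) h

lemma phiMap_apply (t : ℕ) (f : ↥(H t)) (q : ↥Xs) (i : Fin 3) :
    phiMap Xs t f q i = eval (q : Fin 3 → k) (pderiv i (f : R3 k)) := rfl

lemma psi_surj [CharZero k] {m : ℕ} {G : R3 k} (hG : G ∈ H m) {q0 : Fin 3 → k}
    (h1 : eval q0 G = 1) (w : Fin 3 → k) :
    ∃ a : Fin 3 → k, ∀ i, a i + (∑ l, a l * q0 l) * eval q0 (pderiv i G) = w i := by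
  set g : Fin 3 → k := fun i => eval q0 (pderiv i G) with hg
  have hgq : ∑ i, q0 i * g i = (m : k) := by
    have := euler_eval hG q0
    rwa [h1, mul_one] at this
  let ψ : (Fin 3 → k) →ₗ[k] (Fin 3 → k) :=
    { toFun := fun a i => a i + (∑ l, a l * q0 l) * g i
      map_add' := by
        intros x y; funext i
        simp only [Pi.add_apply, add_mul, Finset.sum_add_distrib]
        ring
      map_smul' := by
        intros c x; funext i
        simp only [Pi.smul_apply, smul_eq_mul, RingHom.id_apply]
        rw [show ∑ l, c * x l * q0 l = c * ∑ l, x l * q0 l by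
          rw [Finset.mul_sum]; exact Finset.sum_congr rfl fun l _ => by ring]
        ring }
  have hinj : Function.Injective ψ := by
    rw [← LinearMap.ker_eq_bot, eq_bot_iff]
    rintro a ha
    simp only [LinearMap.mem_ker] at ha
    have haz : ∀ i, a i + (∑ l, a l * q0 l) * g i = 0 := fun i => congrFun ha i
    set s : k := ∑ l, a l * q0 l with hs
    have hai : ∀ i, a i = -(s * g i) := fun i =>
      eq_neg_of_add_eq_zero_left (haz i)
    have hsz : s = 0 := by
      have hh : ∑ l, (a l + s * g l) * q0 l = 0 :=
        Finset.sum_eq_zero fun l _ => by rw [haz l, zero_mul]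
      have hexp : ∑ l, (a l + s * g l) * q0 l
          = (∑ l, a l * q0 l) + s * ∑ l, q0 l * g l := by
        rw [Finset.mul_sum, ← Finset.sum_add_distrib]
        exact Finset.sum_congr rfl fun l _ => by ring
      rw [hexp, hgq, ← hs] at hh
      have h4 : s * (1 + (m : k)) = 0 := by linear_combination hh
      have h5 : (1 + (m : k)) ≠ 0 := by
        have h6 : ((1 + m : ℕ) : k) ≠ 0 := Nat.cast_ne_zero.2 (by omega)
        rwa [Nat.cast_add, Nat.cast_one] at h6
      exact (mul_eq_zero.mp h4).resolve_right h5
    have : a = 0 := funext fun i => by rw [hai i, hsz, zero_mul, neg_zero, Pi.zero_apply]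
    simp [this]
  have hsurj := LinearMap.surjective_of_injective hinj
  obtain ⟨a, ha⟩ := hsurj w
  exact ⟨a, fun i => congrFun ha i⟩

lemma phi_surj [CharZero k] {m : ℕ}
    (G : ↥Xs → R3 k) (hGm : ∀ q0, G q0 ∈ H m)
    (hG1 : ∀ q0 : ↥Xs, eval (q0 : Fin 3 → k) (G q0) = 1)
    (hG0 : ∀ q0 q : ↥Xs, q ≠ q0 → eval (q : Fin 3 → k) (G q0) = 0)
    (hGd : ∀ q0 q : ↥Xs, q ≠ q0 → ∀ i, eval (q : Fin 3 → k) (pderiv i (G q0)) = 0) :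
    LinearMap.range (phiMap Xs (m+1)) = ⊤ := by
  classical
  rw [eq_top_iff]
  intro w _
  have hpick : ∀ q0 : ↥Xs, ∃ a : Fin 3 → k,
      ∀ i, a i + (∑ l, a l * (q0 : Fin 3 → k) l) * eval (q0 : Fin 3 → k)
        (pderiv i (G q0)) = w q0 i :=
    fun q0 => psi_surj (hGm q0) (hG1 q0) (w q0)
  choose aa haa using hpick
  refine ⟨⟨∑ q0 : ↥Xs, linForm (aa q0) * G q0,
    Submodule.sum_mem _ fun q0 _ => mul_linForm_mem _ _ (hGm q0)⟩, ?_⟩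
  funext q i
  rw [phiMap_apply]
  simp only [map_sum]
  rw [Finset.sum_eq_single q]
  · rw [pderiv_mul, pderiv_linForm, map_add, map_mul, map_mul, eval_C, eval_linForm,
      hG1 q, mul_one]
    exact haa q i
  · intro q0 _ hne
    rw [pderiv_mul, pderiv_linForm, map_add, map_mul, map_mul, eval_C,
      hG0 q0 q (Ne.symm hne), hGd q0 q (Ne.symm hne) i, mul_zero, mul_zero, add_zero]
  · intro h; exact absurd (Finset.mem_univ q) h

lemma phi_ker [CharZero k] (hX : GoodPoints Xs) {t : ℕ} (ht : t ≠ 0) (f : ↥(H t)) :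
    phiMap Xs t f = 0 ↔ (f : R3 k) ∈ dblIdeal Xs := by
  rw [mem_dblIdeal_iff Xs hX ht f.2]
  constructor
  · intro h q hq i
    have := congrFun (congrFun h ⟨q, hq⟩) i
    rwa [phiMap_apply] at this
  · intro h
    funext q i
    rw [phiMap_apply]
    exact h q.1 q.2 i

lemma main [CharZero k] (hX : GoodPoints Xs) (r : ℕ)
    (hreg : regC (radIdeal Xs) = r + 1) : regC (dblIdeal Xs) ≤ 2 * r + 2 := by
  classical
  choose F hFH hF1 hF0 using fun q0 => exists_separator Xs hX r hreg q0
  have hFsqm : ∀ q0 : ↥Xs, F q0 * F q0 ∈ H (r + r) := fun q0 => by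
    rw [mem_homogeneousSubmodule]
    exact ((mem_homogeneousSubmodule _ _).mp (hFH q0)).mul
      ((mem_homogeneousSubmodule _ _).mp (hFH q0))
  have hFsq1 : ∀ q0 : ↥Xs, eval (q0 : Fin 3 → k) (F q0 * F q0) = 1 := fun q0 => by
    rw [map_mul, hF1, mul_one]
  have hFsq0 : ∀ q0 q : ↥Xs, q ≠ q0 → eval (q : Fin 3 → k) (F q0 * F q0) = 0 :=
    fun q0 q h => by rw [map_mul, hF0 q0 q h, zero_mul]
  have hFsqd : ∀ q0 q : ↥Xs, q ≠ q0 → ∀ i,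
      eval (q : Fin 3 → k) (pderiv i (F q0 * F q0)) = 0 := by
    intro q0 q h i
    rw [pderiv_mul, map_add, map_mul, map_mul, hF0 q0 q h]
    ring
  have h2r1 : LinearMap.range (phiMap Xs (r+r+1)) = ⊤ :=
    phi_surj Xs (fun q0 => F q0 * F q0) hFsqm hFsq1 hFsq0 hFsqd
  -- degree 2r+2 generators
  have hjex : ∀ q0 : ↥Xs, ∃ j, (q0 : Fin 3 → k) j ≠ 0 := by
    intro q0
    by_contra hcon; push_neg at hcon
    exact hX.1 q0.1 q0.2 (funext hcon)
  choose jj hjj using hjex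
  set e0 : ↥Xs → Fin 3 → k :=
    fun q0 => Pi.single (jj q0) ((q0 : Fin 3 → k) (jj q0))⁻¹ with he0
  have hlin1 : ∀ q0 : ↥Xs, eval (q0 : Fin 3 → k) (linForm (e0 q0)) = 1 := by
    intro q0
    rw [eval_linForm, he0]
    simp only [Pi.single_apply, ite_mul, zero_mul, Finset.sum_ite_eq', Finset.mem_univ,
      if_pos]
    exact inv_mul_cancel₀ (hjj q0)
  set G2 : ↥Xs → R3 k := fun q0 => linForm (e0 q0) * (F q0 * F q0) with hG2
  have hG2m : ∀ q0, G2 q0 ∈ H (r+r+1) := fun q0 => mul_linForm_mem _ _ (hFsqm q0)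
  have hG21 : ∀ q0 : ↥Xs, eval (q0 : Fin 3 → k) (G2 q0) = 1 := fun q0 => by
    rw [hG2, map_mul, hlin1, hFsq1, mul_one]
  have hG20 : ∀ q0 q : ↥Xs, q ≠ q0 → eval (q : Fin 3 → k) (G2 q0) = 0 :=
    fun q0 q h => by rw [hG2, map_mul, hFsq0 q0 q h, mul_zero]
  have hG2d : ∀ q0 q : ↥Xs, q ≠ q0 → ∀ i,
      eval (q : Fin 3 → k) (pderiv i (G2 q0)) = 0 := by
    intro q0 q h i
    simp only [hG2, pderiv_mul, pderiv_linForm, map_add, map_mul, eval_C]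
    rw [hF0 q0 q h]
    ring
  have h2r2 : LinearMap.range (phiMap Xs (r+r+1+1)) = ⊤ :=
    phi_surj Xs G2 hG2m hG21 hG20 hG2d
  have hT1 : LinearMap.range (phiMap Xs (2*r+1)) = ⊤ := by
    rw [show 2*r+1 = r+r+1 by ring]; exact h2r1
  have hT2 : LinearMap.range (phiMap Xs (2*r+2)) = ⊤ := by
    rw [show 2*r+2 = r+r+1+1 by ring]; exact h2r2
  have heq : hilb (dblIdeal Xs) (2*r+2) = hilb (dblIdeal Xs) (2*r+2-1) := by
    rw [show 2*r+2-1 = 2*r+1 by omega]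
    rw [hilb_rank (dblIdeal Xs) (2*r+2) (phiMap Xs (2*r+2)) (phi_ker Xs hX (by omega)),
      hilb_rank (dblIdeal Xs) (2*r+1) (phiMap Xs (2*r+1)) (phi_ker Xs hX (by omega)),
      hT1, hT2]
  unfold regC
  exact Nat.sInf_le ⟨by omega, heq⟩

end DblAux

/-- If a reduced point set `X ⊂ ℙ²` has `reg(I_X) = r+1`, then its first
infinitesimal neighborhood `Z` satisfies `reg(I_Z) ≤ 2·reg(I_X) = 2r+2`. -/
theorem stmt0 [CharZero k] (Xs : Finset (Fin 3 → k)) (hX : GoodPoints Xs)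
    (r : ℕ) (hreg : regC (radIdeal Xs) = r + 1) :
    regC (dblIdeal Xs) ≤ 2 * r + 2 :=
  DblAux.main Xs hX r hreg

end
end

section
/- Let λ_1,...,λ_t be t distinct lines in P^2 such that each λ_i meets the other t−1 lines in t−1 distinct points (no three lines concurrent), and let C_t be the set of the binomial(t,2) pairwise intersection points. Then the first difference of the Hilbert function of C_t is (1, 2, 3, ..., t−1); in particular C_t lies on no curve of degree t−2, and C_t has generic Hilbert function. -/
open MvPolynomial

noncomputable section

variable {k : Type} [Field k]

/-! ### Auxiliary lemmas for `stmt2` -/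

lemma aux_finrank_homog (k : Type) [Field k] (n : ℕ) :
    Module.finrank k (homogeneousSubmodule (Fin 3) k n) = (n + 2).choose 2 := by
  have hset := homogeneousSubmodule_eq_finsupp_supported (Fin 3) k n
  have e : {d : Fin 3 →₀ ℕ | d.degree = n} ≃ Sym (Fin 3) n := by
    refine (Equiv.subtypeEquivRight ?_).trans (Sym.equivNatSum (Fin 3) n).symm
    intro d
    constructor
    · intro h; rw [← h]; rfl
    · intro h; rw [← h]; rfl
  haveI : Fintype ↥{d : Fin 3 →₀ ℕ | d.degree = n} := Fintype.ofEquiv _ e.symm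
  have hcard : Fintype.card ↥{d : Fin 3 →₀ ℕ | d.degree = n} = (n + 2).choose 2 := by
    rw [Fintype.card_congr e, Sym.card_sym_eq_choose, Fintype.card_fin]
    have h1 : 3 + n - 1 = n + 2 := by omega
    rw [h1, show n = n + 2 - 2 from by omega]
    exact Nat.choose_symm (by omega)
  rw [hset]
  exact (Module.finrank_eq_card_basis (MvPolynomial.basisRestrictSupport k
    {d : Fin 3 →₀ ℕ | d.degree = n})).trans hcard

lemma aux_finDim_homog (n : ℕ) :
    FiniteDimensional k ↥(homogeneousSubmodule (Fin 3) k n) := by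
  have hset := homogeneousSubmodule_eq_finsupp_supported (Fin 3) k n
  have e : {d : Fin 3 →₀ ℕ | d.degree = n} ≃ Sym (Fin 3) n := by
    refine (Equiv.subtypeEquivRight ?_).trans (Sym.equivNatSum (Fin 3) n).symm
    intro d
    constructor
    · intro h; rw [← h]; rfl
    · intro h; rw [← h]; rfl
  haveI : Fintype ↥{d : Fin 3 →₀ ℕ | d.degree = n} := Fintype.ofEquiv _ e.symm
  rw [hset]
  exact Module.Finite.of_basis (MvPolynomial.basisRestrictSupport k
    {d : Fin 3 →₀ ℕ | d.degree = n})

lemma aux_eval_smul {f : R3 k} {d : ℕ} (hf : f.IsHomogeneous d) (c : k) (x : Fin 3 → k) :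
    eval (c • x) f = c ^ d * eval x f := by
  rw [eval_eq', eval_eq', Finset.mul_sum]
  apply Finset.sum_congr rfl
  intro σ hσ
  have hdeg : ∑ i, σ i = d := by
    have h1 := hf (MvPolynomial.mem_support_iff.mp hσ)
    rw [Pi.one_def, ← DFunLike.congr_fun Finsupp.degree_eq_weight_one σ] at h1
    rw [← h1]
    unfold Finsupp.degree
    exact (Finset.sum_subset (Finset.subset_univ _)
      (fun i _ hi => Finsupp.notMem_support_iff.mp hi)).symm
  have : ∏ i, (c • x) i ^ σ i = c ^ d * ∏ i, x i ^ σ i := by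
    simp only [Pi.smul_apply, smul_eq_mul, mul_pow]
    rw [Finset.prod_mul_distrib, Finset.prod_pow_eq_pow_sum, hdeg]
  rw [this]; ring

lemma aux_mem_radIdeal {Ct : Finset (Fin 3 → k)} {f : R3 k} {d : ℕ} (hf : f.IsHomogeneous d) :
    f ∈ radIdeal Ct ↔ ∀ p ∈ Ct, eval p f = 0 := by
  simp only [radIdeal, Ideal.mem_iInf]
  constructor
  · exact fun h p hp => h p hp p ⟨1, (one_smul k p).symm⟩
  · rintro h p hp x ⟨c, rfl⟩
    rw [aux_eval_smul hf, h p hp, mul_zero]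

lemma aux_eval_linForm (a x : Fin 3 → k) : eval x (linForm a) = ∑ i, a i * x i := by
  simp [linForm]

lemma aux_linForm_homog (a : Fin 3 → k) : (linForm a).IsHomogeneous 1 :=
  MvPolynomial.IsHomogeneous.sum _ _ _ fun i _ => isHomogeneous_C_mul_X _ _

lemma aux_cross_perp {a b x : Fin 3 → k} (hax : onLine a x) (hbx : onLine b x) :
    crossProduct x (crossProduct a b) = 0 := by
  have h1 : ∑ i, a i * x i = 0 := hax
  have h2 : ∑ i, b i * x i = 0 := hbx
  rw [Fin.sum_univ_three] at h1 h2
  rw [cross_apply, cross_apply]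
  have hs : ∀ (u : Fin 3 → k), u 0 = u 0 ∧ u 1 = u 1 := fun u => ⟨rfl, rfl⟩
  refine Matrix.cons_eq_zero_iff.mpr ⟨?_, Matrix.cons_eq_zero_iff.mpr ⟨?_,
      Matrix.cons_eq_zero_iff.mpr ⟨?_, Subsingleton.elim _ _⟩⟩⟩ <;>
    simp only [Matrix.cons_val_zero, Matrix.cons_val_one, Matrix.head_cons,
      Matrix.cons_val_two, Matrix.tail_cons]
  · linear_combination a 0 * h2 - b 0 * h1
  · linear_combination a 1 * h2 - b 1 * h1
  · linear_combination a 2 * h2 - b 2 * h1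

lemma aux_proj_unique {a b p q : Fin 3 → k} (hab : ¬ SameProj a b) (ha : a ≠ 0) (hb : b ≠ 0)
    (hp : p ≠ 0) (hq : q ≠ 0)
    (hap : onLine a p) (hbp : onLine b p) (haq : onLine a q) (hbq : onLine b q) :
    SameProj p q := by
  have hindep : LinearIndependent k ![a, b] := by
    rw [linearIndependent_fin2]
    refine ⟨by simpa using hb, ?_⟩
    intro c hc
    simp only [Matrix.cons_val_one, Matrix.head_cons, Matrix.cons_val_zero] at hc
    rcases eq_or_ne c 0 with rfl | hc0
    · rw [zero_smul] at hc; exact ha hc.symm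
    · exact hab ⟨c⁻¹, inv_ne_zero hc0, by rw [← hc, smul_smul, inv_mul_cancel₀ hc0, one_smul]⟩
  have hn : crossProduct a b ≠ 0 := crossProduct_ne_zero_iff_linearIndependent.mpr hindep
  have key : ∀ x : Fin 3 → k, onLine a x → onLine b x → ∃ c : k, x = c • (crossProduct a b : Fin 3 → k) := by
    intro x hax hbx
    have h0 := aux_cross_perp hax hbx
    have hdep : ¬ LinearIndependent k ![x, crossProduct a b] := fun h =>
      (crossProduct_ne_zero_iff_linearIndependent.mpr h) h0
    rw [linearIndependent_fin2] at hdep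
    push_neg at hdep
    rcases hdep (by simpa using hn) with ⟨c, hc⟩
    simp only [Matrix.cons_val_one, Matrix.head_cons, Matrix.cons_val_zero] at hc
    exact ⟨c, hc.symm⟩
  obtain ⟨cp, hcp⟩ := key p hap hbp
  obtain ⟨cq, hcq⟩ := key q haq hbq
  have hcp0 : cp ≠ 0 := fun h => hp (by rw [hcp, h, zero_smul])
  have hcq0 : cq ≠ 0 := fun h => hq (by rw [hcq, h, zero_smul])
  refine ⟨cq * cp⁻¹, mul_ne_zero hcq0 (inv_ne_zero hcp0), ?_⟩
  rw [hcq, hcp, smul_smul, mul_assoc, inv_mul_cancel₀ hcp0, mul_one]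

/-- The evaluation linear map on the degree-`j` homogeneous component. -/
def evalMap (Ct : Finset (Fin 3 → k)) (j : ℕ) :
    ↥(homogeneousSubmodule (Fin 3) k j) →ₗ[k] ({x // x ∈ Ct} → k) where
  toFun f p := eval p.1 f.1
  map_add' f g := by funext p; simp
  map_smul' c f := by funext p; simp [MvPolynomial.smul_eval]

lemma aux_inf_eq_map_ker (Ct : Finset (Fin 3 → k)) (j : ℕ) :
    Submodule.restrictScalars k (radIdeal Ct) ⊓ homogeneousSubmodule (Fin 3) k j
      = (LinearMap.ker (evalMap Ct j)).map (homogeneousSubmodule (Fin 3) k j).subtype := by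
  ext f
  simp only [Submodule.mem_inf, Submodule.restrictScalars_mem, Submodule.mem_map,
    LinearMap.mem_ker, Submodule.coe_subtype]
  constructor
  · rintro ⟨hrad, hhom⟩
    refine ⟨⟨f, hhom⟩, ?_, rfl⟩
    funext p
    exact (aux_mem_radIdeal hhom).mp hrad p.1 p.2
  · rintro ⟨⟨g, hg⟩, hker, rfl⟩
    exact ⟨(aux_mem_radIdeal hg).mpr fun p hp => congrFun hker ⟨p, hp⟩, hg⟩

lemma aux_surj (Ct : Finset (Fin 3 → k)) (j : ℕ)
    (hsep : ∀ p ∈ Ct, ∃ f : R3 k, f.IsHomogeneous j ∧ (∀ q ∈ Ct, q ≠ p → eval q f = 0)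
      ∧ eval p f ≠ 0) :
    Function.Surjective (evalMap Ct j) := by
  classical
  rw [← LinearMap.range_eq_top, eq_top_iff]
  intro g _
  have hg : g = ∑ p : {x // x ∈ Ct}, g p • (Pi.single p 1 : {x // x ∈ Ct} → k) := by
    funext q
    rw [Finset.sum_apply]
    simp [Pi.single_apply]
  rw [hg]
  refine Submodule.sum_mem _ fun p _ => Submodule.smul_mem _ _ ?_
  obtain ⟨f, hfh, hf0, hfp⟩ := hsep p.1 p.2
  refine ⟨(eval p.1 f)⁻¹ • ⟨f, hfh⟩, ?_⟩
  funext q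
  have hval : (evalMap Ct j) (((eval p.1 f)⁻¹) • (⟨f, hfh⟩ : homogeneousSubmodule (Fin 3) k j)) q
      = (eval p.1 f)⁻¹ * eval q.1 f := by
    show eval q.1 (((eval p.1 f)⁻¹) • f) = _
    rw [MvPolynomial.smul_eval]
  rw [hval]
  rcases eq_or_ne q p with rfl | hqp
  · rw [inv_mul_cancel₀ hfp]
    simp [Pi.single_apply]
  · have hne : q.1 ≠ p.1 := fun h => hqp (Subtype.ext h)
    rw [hf0 q.1 q.2 hne, mul_zero]
    simp [Pi.single_apply, hqp]

lemma aux_sep (t : ℕ) (ht : 2 ≤ t) (ℓ : Fin t → (Fin 3 → k)) (hℓ : GenLines t ℓ)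
    (Ct : Finset (Fin 3 → k)) (hC : IsIntersectionConfig t ℓ Ct) (j : ℕ) (hj : t - 2 ≤ j) :
    ∀ p ∈ Ct, ∃ f : R3 k, f.IsHomogeneous j ∧ (∀ q ∈ Ct, q ≠ p → eval q f = 0)
      ∧ eval p f ≠ 0 := by
  classical
  intro p hp
  obtain ⟨i0, j0, hij, hpi0, hpj0⟩ := hC.2.2.1 p hp
  have hp0 : p ≠ 0 := hC.1.1 p hp
  obtain ⟨m, hm⟩ : ∃ m, p m ≠ 0 := by
    by_contra h; push_neg at h; exact hp0 (funext h)
  set S : Finset (Fin t) := (Finset.univ.erase i0).erase j0 with hS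
  have hj0mem : j0 ∈ Finset.univ.erase i0 := Finset.mem_erase.mpr ⟨hij.symm, Finset.mem_univ _⟩
  have hScard : S.card = t - 2 := by
    rw [hS, Finset.card_erase_of_mem hj0mem, Finset.card_erase_of_mem (Finset.mem_univ i0),
      Finset.card_univ, Fintype.card_fin]
    omega
  refine ⟨X m ^ (j - (t - 2)) * ∏ a ∈ S, linForm (ℓ a), ?_, ?_, ?_⟩
  · have h1 := (isHomogeneous_X_pow (R := k) m (j - (t - 2))).mul
      (MvPolynomial.IsHomogeneous.prod S _ (fun _ => 1) (fun a _ => aux_linForm_homog (ℓ a)))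
    rw [Finset.sum_const, smul_eq_mul, mul_one, hScard] at h1
    rwa [show j - (t - 2) + (t - 2) = j from by omega] at h1
  · intro q hq hqp
    obtain ⟨a0, b0, hab, hqa, hqb⟩ := hC.2.2.1 q hq
    have hq0 : q ≠ 0 := hC.1.1 q hq
    have hmem : ∃ c ∈ S, onLine (ℓ c) q := by
      by_cases ha : a0 ∈ S
      · exact ⟨a0, ha, hqa⟩
      by_cases hb : b0 ∈ S
      · exact ⟨b0, hb, hqb⟩
      exfalso
      simp only [hS, Finset.mem_erase, Finset.mem_univ, and_true, not_and, not_not] at ha hb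
      -- a0, b0 ∈ {i0, j0}
      have hqi0j0 : onLine (ℓ i0) q ∧ onLine (ℓ j0) q := by
        rcases eq_or_ne a0 j0 with rfl | ha'
        · have hb' : b0 = i0 := hb (fun h => hab h.symm)
          subst hb'
          exact ⟨hqb, hqa⟩
        · have ha'' : a0 = i0 := ha ha'
          subst ha''
          have hb' : b0 = j0 := by
            rcases eq_or_ne b0 j0 with rfl | h1
            · rfl
            · exact absurd (hb h1) (fun h => hab h.symm)
          subst hb'
          exact ⟨hqa, hqb⟩
      have hsp : SameProj p q := aux_proj_unique (hℓ.2.1 i0 j0 hij) (hℓ.1 i0) (hℓ.1 j0)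
        hp0 hq0 hpi0 hpj0 hqi0j0.1 hqi0j0.2
      exact hC.1.2 p hp q hq (fun h => hqp h.symm) hsp
    obtain ⟨c, hcS, hcq⟩ := hmem
    rw [map_mul, map_prod]
    rw [Finset.prod_eq_zero hcS (by rw [aux_eval_linForm]; exact hcq), mul_zero]
  · rw [map_mul, map_pow, eval_X]
    refine mul_ne_zero (pow_ne_zero _ hm) ?_
    rw [map_prod]
    apply Finset.prod_ne_zero_iff.mpr
    intro a haS
    rw [aux_eval_linForm]
    intro hzero
    have haij : a ≠ j0 ∧ a ≠ i0 := by
      simp only [hS, Finset.mem_erase, Finset.mem_univ, and_true] at haS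
      exact ⟨haS.1, haS.2⟩
    exact hℓ.2.2 a i0 j0 haij.2 hij haij.1 p hp0 ⟨hzero, hpi0, hpj0⟩


/-- the intersection configuration `C_t` of `t` general-position lines has
Hilbert function with first difference `(1,2,…,t-1)`, i.e. the generic Hilbert function
of `t.choose 2` points; in particular it lies on no curve of degree `t-2`. -/
theorem stmt2 [CharZero k] (t : ℕ) (ht : 2 ≤ t) (ℓ : Fin t → (Fin 3 → k))
    (hℓ : GenLines t ℓ) (Ct : Finset (Fin 3 → k)) (hC : IsIntersectionConfig t ℓ Ct) :
    (∀ j, hilb (radIdeal Ct) j = min ((j + 2).choose 2) (t.choose 2)) ∧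
    ¬ ∃ f : R3 k, f ≠ 0 ∧ IsHomog f (t - 2) ∧ f ∈ radIdeal Ct := by
  classical
  have hcard : Ct.card = t.choose 2 := hC.2.1
  have hW : ∀ j, t - 2 ≤ j →
      Module.finrank k ↥(Submodule.restrictScalars k (radIdeal Ct)
        ⊓ homogeneousSubmodule (Fin 3) k j) = (j + 2).choose 2 - t.choose 2 := by
    intro j hj
    haveI := aux_finDim_homog (k := k) j
    have hsurj := aux_surj Ct j (aux_sep t ht ℓ hℓ Ct hC j hj)
    rw [aux_inf_eq_map_ker, Submodule.finrank_map_subtype_eq]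
    have h1 : Module.finrank k ({x // x ∈ Ct} → k)
        + Module.finrank k ↥(LinearMap.ker (evalMap Ct j))
        = Module.finrank k ↥(homogeneousSubmodule (Fin 3) k j) := by
      rw [← finrank_top k ({x // x ∈ Ct} → k), ← LinearMap.range_eq_top.mpr hsurj]
      exact LinearMap.finrank_range_add_finrank_ker (evalMap Ct j)
    rw [Module.finrank_fintype_fun_eq_card, Fintype.card_coe, hcard,
      aux_finrank_homog k j] at h1
    exact eq_tsub_of_add_eq ((add_comm _ _).trans h1)

  have hbot : Submodule.restrictScalars k (radIdeal Ct)
      ⊓ homogeneousSubmodule (Fin 3) k (t - 2) = ⊥ := by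
    haveI := aux_finDim_homog (k := k) (t - 2)
    have h := hW (t - 2) le_rfl
    rw [Nat.sub_add_cancel ht, Nat.sub_self] at h
    rw [aux_inf_eq_map_ker] at h ⊢
    rw [Submodule.finrank_map_subtype_eq] at h
    rw [Submodule.finrank_eq_zero.mp h, Submodule.map_bot]
  have hbotmem : ∀ f : R3 k, f ∈ radIdeal Ct → f.IsHomogeneous (t - 2) → f = 0 := by
    intro f hf1 hf2
    have : f ∈ (⊥ : Submodule k (R3 k)) := by
      rw [← hbot]
      exact Submodule.mem_inf.mpr ⟨Submodule.restrictScalars_mem _ _ _ |>.mpr hf1, hf2⟩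
    exact Submodule.mem_bot k |>.mp this
  have hWlow : ∀ j, j + 2 < t → Submodule.restrictScalars k (radIdeal Ct)
      ⊓ homogeneousSubmodule (Fin 3) k j = ⊥ := by
    intro j hjt
    rw [Submodule.eq_bot_iff]
    rintro f hf
    obtain ⟨hf1, hf2⟩ := Submodule.mem_inf.mp hf
    by_contra hf0
    have hg1 : (X 0 ^ (t - 2 - j) * f) ∈ radIdeal Ct :=
      Ideal.mul_mem_left _ _ (Submodule.restrictScalars_mem _ _ _ |>.mp hf1)
    have hg2 : (X (R := k) 0 ^ (t - 2 - j) * f).IsHomogeneous (t - 2) := by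
      have h1 := (isHomogeneous_X_pow (R := k) 0 (t - 2 - j)).mul (hf2 : f.IsHomogeneous j)
      rwa [show t - 2 - j + j = t - 2 from by omega] at h1
    have hne : (X (R := k) 0 ^ (t - 2 - j) * f) ≠ 0 :=
      mul_ne_zero (pow_ne_zero _ (MvPolynomial.X_ne_zero 0)) hf0
    exact hne (hbotmem _ hg1 hg2)
  constructor
  · intro j
    unfold hilb
    by_cases hjt : t ≤ j + 2
    · rw [hW j (by omega), aux_finrank_homog k j]
      have hmono : t.choose 2 ≤ (j + 2).choose 2 := Nat.choose_le_choose 2 hjt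
      rw [min_eq_right hmono]
      omega
    · rw [hWlow j (by omega), aux_finrank_homog k j, finrank_bot]
      have hmono : (j + 2).choose 2 ≤ t.choose 2 := Nat.choose_le_choose 2 (by omega)
      rw [min_eq_left hmono]
      omega
  · rintro ⟨f, hf0, hfh, hfI⟩
    exact hf0 (hbotmem f hfI hfh)


end
end

section
/- Let X be a zero-dimensional subscheme of P^2 with saturated ideal I_X ⊆ R = k[x_0,x_1,x_2], let F ∈ I_X be homogeneous of degree d_1 and G homogeneous of degree d_2 such that {F,G} is a regular sequence. Then I_Z := G·I_X + (F) is a saturated ideal of a zero-dimensional scheme Z, there is an exact sequence 0 → R(−d_1−d_2) → I_X(−d_2) ⊕ R(−d_1) → I_Z → 0, and h_{R/I_Z}(t) = h_{R/(F,G)}(t) + h_{R/I_X}(t−d_2) for all t; in particular deg Z = deg X + d_1·d_2. -/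
open MvPolynomial

noncomputable section

variable {k : Type} [Field k]

namespace Stmt5Aux

/-- Substitute `X i ↦ 0`. -/
def pz (i : Fin 3) : R3 k →ₐ[k] R3 k := aeval (Function.update X i 0)

lemma pz_X_self (i : Fin 3) : pz (k := k) i (X i) = 0 := by simp [pz]

lemma pz_X_ne (i j : Fin 3) (h : j ≠ i) : pz (k := k) i (X j) = X j := by
  simp [pz, Function.update_of_ne h]

lemma X_dvd_sub_pz (i : Fin 3) (p : R3 k) : X i ∣ p - pz i p := by
  induction p using MvPolynomial.induction_on with
  | C a => simp [pz]
  | add p q hp hq =>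
      have : p + q - pz i (p + q) = (p - pz i p) + (q - pz i q) := by
        rw [map_add]; ring
      rw [this]; exact dvd_add hp hq
  | mul_X p j hp =>
      rcases eq_or_ne j i with rfl | hji
      · rw [map_mul, pz_X_self, mul_zero, sub_zero]; exact Dvd.intro_left p rfl
      · have : p * X j - pz i (p * X j) = (p - pz i p) * X j := by
          rw [map_mul, pz_X_ne i j hji]; ring
        rw [this]; exact Dvd.dvd.mul_right hp _

lemma X_dvd_iff_pz (i : Fin 3) (p : R3 k) : X i ∣ p ↔ pz i p = 0 := by
  constructor
  · rintro ⟨q, rfl⟩; rw [map_mul, pz_X_self, zero_mul]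
  · intro h
    have := X_dvd_sub_pz i p
    rwa [h, sub_zero] at this

lemma prime_X3 (i : Fin 3) : Prime (X i : R3 k) := by
  refine ⟨X_ne_zero i, ?_, ?_⟩
  · intro h
    have := h.map (constantCoeff (σ := Fin 3) (R := k))
    rw [constantCoeff_X] at this
    exact not_isUnit_zero this
  · intro a b hab
    rw [X_dvd_iff_pz] at hab ⊢
    rw [X_dvd_iff_pz (p := b)]
    rw [map_mul] at hab
    exact mul_eq_zero.mp hab

lemma not_X_dvd_X {i j : Fin 3} (h : j ≠ i) : ¬ (X i : R3 k) ∣ X j := by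
  rw [X_dvd_iff_pz, pz_X_ne i j h]
  exact X_ne_zero j

/-- Koszul H¹-type: compatible family is a multiple family. -/
lemma koszul1 (b : Fin 3 → R3 k)
    (h01 : X 1 * b 0 = X 0 * b 1) (h02 : X 2 * b 0 = X 0 * b 2) :
    ∃ c, ∀ i, b i = X i * c := by
  have hdvd : (X 0 : R3 k) ∣ b 0 := by
    rcases (prime_X3 0).2.2 (X 1) (b 0) ⟨b 1, h01⟩ with h | h
    · exact absurd h (not_X_dvd_X (by decide))
    · exact h
  obtain ⟨c, hc⟩ := hdvd
  refine ⟨c, ?_⟩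
  have hx0 : (X 0 : R3 k) ≠ 0 := X_ne_zero 0
  intro i
  fin_cases i <;> simp only [Fin.isValue, Fin.mk_one, Fin.reduceFinMk, show ((⟨0,by norm_num⟩ : Fin 3)) = 0 from rfl]
  · simpa using hc
  · apply mul_left_cancel₀ hx0
    show X 0 * b 1 = X 0 * (X 1 * c)
    rw [← h01, hc]; ring
  · apply mul_left_cancel₀ hx0
    show X 0 * b 2 = X 0 * (X 2 * c)
    rw [← h02, hc]; ring

/-- Koszul H²-type exactness for the regular sequence `X 0, X 1, X 2`. -/
lemma koszul2 (u v w : R3 k) (h : X 0 * u = X 1 * v - X 2 * w) :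
    ∃ d0 d1 d2, u = X 1 * d2 - X 2 * d1 ∧ v = X 0 * d2 - X 2 * d0 ∧
      w = X 0 * d1 - X 1 * d0 := by
  have hπ : X 1 * pz 0 v = X 2 * pz 0 w := by
    have := congrArg (pz (k := k) 0) h
    simp only [map_mul, map_sub, pz_X_self, zero_mul] at this
    rw [pz_X_ne 0 1 (by decide), pz_X_ne 0 2 (by decide)] at this
    linear_combination -this
  have hdvd : (X 2 : R3 k) ∣ pz 0 v := by
    rcases (prime_X3 2).2.2 (X 1) (pz 0 v) ⟨pz 0 w, hπ⟩ with h' | h'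
    · exact absurd h' (not_X_dvd_X (by decide))
    · exact h'
  obtain ⟨s, hs⟩ := hdvd
  have hw : pz 0 w = X 1 * s := by
    apply mul_left_cancel₀ (X_ne_zero (R := k) 2)
    rw [← hπ, hs]; ring
  obtain ⟨α, hα⟩ := X_dvd_sub_pz (k := k) 0 v
  obtain ⟨β, hβ⟩ := X_dvd_sub_pz (k := k) 0 w
  have hv' : v = X 2 * s + X 0 * α := by rw [← hs]; linear_combination hα
  have hw' : w = X 1 * s + X 0 * β := by rw [← hw]; linear_combination hβ
  have hu : u = X 1 * α - X 2 * β := by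
    apply mul_left_cancel₀ (X_ne_zero (R := k) 0)
    rw [h, hv', hw']; ring
  exact ⟨-s, β, α, by rw [hu], by rw [hv']; ring, by rw [hw']; ring⟩


/-- homogeneous component of a product with a homogeneous polynomial -/
lemma hc_mul {h : R3 k} {d : ℕ} (hh : h ∈ homogeneousSubmodule (Fin 3) k d)
    (a : R3 k) (s : ℕ) :
    homogeneousComponent s (h * a) =
      if d ≤ s then h * homogeneousComponent (s - d) a else 0 := by
  conv_lhs => rw [← sum_homogeneousComponent a, Finset.mul_sum, map_sum]
  have hterm : ∀ e, homogeneousComponent s (h * homogeneousComponent e a) =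
      if s = d + e then h * homogeneousComponent e a else 0 := by
    intro e
    apply homogeneousComponent_of_mem
    exact (mem_homogeneousSubmodule _ _).mpr
      (((mem_homogeneousSubmodule _ _).mp hh).mul (homogeneousComponent_isHomogeneous e a))
  rw [Finset.sum_congr rfl fun e _ => hterm e]
  by_cases hds : d ≤ s
  · rw [if_pos hds]
    rw [Finset.sum_eq_single (s - d) (fun e _ hne => if_neg (by omega))]
    · rw [if_pos (by omega)]
    · intro hnot
      simp only [Finset.mem_range, not_lt] at hnot
      rw [if_pos (by omega), homogeneousComponent_eq_zero _ a (by omega), mul_zero]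
  · rw [if_neg hds, Finset.sum_eq_zero]
    intro e _
    rw [if_neg (by omega)]


/-- The degree-`n` monomial exponents are in bijection with `Sym (Fin 3) n`. -/
def degreeEquivSym (n : ℕ) : {d : Fin 3 →₀ ℕ // d.degree = n} ≃ Sym (Fin 3) n :=
  ((Equiv.subtypeEquivRight (fun d => by
      simp [Finsupp.degree, Finsupp.sum]; exact Iff.rfl )).trans (Sym.equivNatSum (Fin 3) n).symm)

instance degFintype (n : ℕ) : Fintype {d : Fin 3 →₀ ℕ // d.degree = n} :=
  Fintype.ofEquiv _ (degreeEquivSym n).symm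

lemma card_deg (n : ℕ) :
    Fintype.card {d : Fin 3 →₀ ℕ // d.degree = n} = (n + 2).choose 2 := by
  rw [Fintype.card_congr (degreeEquivSym n), Sym.card_sym_eq_multichoose,
    Nat.multichoose_eq, Fintype.card_fin]
  have h1 : 3 + n - 1 = n + 2 := by omega
  rw [h1]
  rw [← Nat.choose_symm (by omega : n ≤ n + 2)]
  congr 1
  omega

/-- `H n` as supported finsupps; linear equivalence with an indexed finsupp space. -/
def homogEquiv (n : ℕ) :
    (homogeneousSubmodule (Fin 3) k n) ≃ₗ[k] ({d : Fin 3 →₀ ℕ // d.degree = n} →₀ k) := by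
  refine (LinearEquiv.ofEq _ _ (homogeneousSubmodule_eq_finsupp_supported (Fin 3) k n)).trans
    ((AddMonoidAlgebra.supportedEquivFinsupp _).trans
      (Finsupp.domLCongr (Equiv.subtypeEquivRight (fun d => by simp))))

instance homogFD (n : ℕ) :
    FiniteDimensional k (homogeneousSubmodule (Fin 3) k n) :=
  Module.Finite.equiv (homogEquiv (k := k) n).symm

lemma dimH (n : ℕ) :
    Module.finrank k (homogeneousSubmodule (Fin 3) k n) = (n + 2).choose 2 := by
  rw [(homogEquiv (k := k) n).finrank_eq, Module.finrank_finsupp, card_deg,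
    Module.finrank_self, mul_one]

lemma choose2 (n : ℕ) : 2 * (n + 2).choose 2 = (n + 1) * (n + 2) := by
  induction n with
  | zero => rfl
  | succ m ih =>
      have h := Nat.choose_succ_succ (m + 2) 1
      norm_num [Nat.choose_one_right] at h
      rw [show m + 1 + 2 = m + 3 from rfl, h]
      nlinarith [ih]


/-- degree-`s` part of an ideal, as a `k`-submodule. -/
def Ih (I : Ideal (R3 k)) (s : ℕ) : Submodule k (R3 k) :=
  Submodule.restrictScalars k I ⊓ homogeneousSubmodule (Fin 3) k s

lemma hilb_eq (I : Ideal (R3 k)) (t : ℕ) :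
    hilb I t = Module.finrank k (homogeneousSubmodule (Fin 3) k t) -
      Module.finrank k (Ih I t) := rfl

lemma mem_Ih {I : Ideal (R3 k)} {s : ℕ} {x : R3 k} :
    x ∈ Ih I s ↔ x ∈ I ∧ x ∈ homogeneousSubmodule (Fin 3) k s := by
  simp [Ih, Submodule.mem_inf]

instance IhFD (I : Ideal (R3 k)) (s : ℕ) : FiniteDimensional k (Ih I s) :=
  Submodule.finiteDimensional_of_le (inf_le_right : _ ≤ homogeneousSubmodule (Fin 3) k s)

lemma Ih_le (I : Ideal (R3 k)) (s : ℕ) :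
    Ih I s ≤ homogeneousSubmodule (Fin 3) k s := inf_le_right

lemma finrank_Ih_le (I : Ideal (R3 k)) (s : ℕ) :
    Module.finrank k (Ih I s) ≤ Module.finrank k (homogeneousSubmodule (Fin 3) k s) :=
  Submodule.finrank_mono (Ih_le I s)

lemma Ih_mono {I J : Ideal (R3 k)} (h : I ≤ J) (s : ℕ) : Ih I s ≤ Ih J s := by
  intro x hx
  rw [mem_Ih] at hx ⊢
  exact ⟨h hx.1, hx.2⟩

lemma Ih_top (s : ℕ) : Ih (⊤ : Ideal (R3 k)) s = homogeneousSubmodule (Fin 3) k s := by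
  ext x; simp [mem_Ih]

lemma Ih_inf (I J : Ideal (R3 k)) (s : ℕ) : Ih (I ⊓ J) s = Ih I s ⊓ Ih J s := by
  ext x
  simp only [mem_Ih, Submodule.mem_inf, Ideal.mem_inf]
  tauto

lemma homogTop : HomogIdeal (⊤ : Ideal (R3 k)) := fun _ _ _ => trivial

lemma Ih_mul_span {h : R3 k} {d : ℕ} (hh : h ∈ homogeneousSubmodule (Fin 3) k d)
    {I : Ideal (R3 k)} (hI : HomogIdeal I) {s : ℕ} (hds : d ≤ s) :
    Ih (Ideal.span {h} * I) s =
      Submodule.map (LinearMap.mulLeft k h) (Ih I (s - d)) := by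
  apply le_antisymm
  · intro x hx
    obtain ⟨hx1, hx2⟩ := mem_Ih.mp hx
    obtain ⟨a, haI, hax⟩ := Ideal.mem_span_singleton_mul.mp hx1
    have hxx : x = h * homogeneousComponent (s - d) a := by
      have h1 : homogeneousComponent s x = x := by
        rw [homogeneousComponent_of_mem hx2, if_pos rfl]
      rw [← h1, ← hax, hc_mul hh, if_pos hds]
    refine ⟨homogeneousComponent (s - d) a, mem_Ih.mpr ⟨hI a haI _, ?_⟩, ?_⟩
    · exact (mem_homogeneousSubmodule _ _).mpr (homogeneousComponent_isHomogeneous _ a)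
    · rw [hxx]; rfl
  · rintro x ⟨q, hq, rfl⟩
    obtain ⟨hq1, hq2⟩ := mem_Ih.mp hq
    rw [LinearMap.mulLeft_apply]
    refine mem_Ih.mpr ⟨Ideal.mem_span_singleton_mul.mpr ⟨q, hq1, rfl⟩, ?_⟩
    have := ((mem_homogeneousSubmodule _ _).mp hh).mul ((mem_homogeneousSubmodule _ _).mp hq2)
    rw [Nat.add_sub_cancel' hds] at this
    exact (mem_homogeneousSubmodule _ _).mpr this

lemma Ih_mul_span_bot {h : R3 k} {d : ℕ} (hh : h ∈ homogeneousSubmodule (Fin 3) k d)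
    (I : Ideal (R3 k)) {s : ℕ} (hds : s < d) :
    Ih (Ideal.span {h} * I) s = ⊥ := by
  rw [eq_bot_iff]
  intro x hx
  obtain ⟨hx1, hx2⟩ := mem_Ih.mp hx
  obtain ⟨a, haI, hax⟩ := Ideal.mem_span_singleton_mul.mp hx1
  have hxx : x = 0 := by
    have h1 : homogeneousComponent s x = x := by
      rw [homogeneousComponent_of_mem hx2, if_pos rfl]
    rw [← h1, ← hax, hc_mul hh, if_neg (by omega)]
  simp [hxx]

lemma Ih_sup {h1 h2 : R3 k} {e1 e2 : ℕ}
    (hh1 : h1 ∈ homogeneousSubmodule (Fin 3) k e1)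
    (hh2 : h2 ∈ homogeneousSubmodule (Fin 3) k e2)
    {I J : Ideal (R3 k)} (hI : HomogIdeal I) (hJ : HomogIdeal J) (s : ℕ) :
    Ih (Ideal.span {h1} * I ⊔ Ideal.span {h2} * J) s =
      Ih (Ideal.span {h1} * I) s ⊔ Ih (Ideal.span {h2} * J) s := by
  apply le_antisymm
  · intro x hx
    obtain ⟨hx1, hx2⟩ := mem_Ih.mp hx
    obtain ⟨y, hy, z, hz, hyz⟩ := Submodule.mem_sup.mp hx1
    obtain ⟨a, haI, hay⟩ := Ideal.mem_span_singleton_mul.mp hy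
    obtain ⟨b, hbJ, hbz⟩ := Ideal.mem_span_singleton_mul.mp hz
    have hxx : x = homogeneousComponent s (h1 * a) + homogeneousComponent s (h2 * b) := by
      rw [← map_add, hay, hbz, hyz, homogeneousComponent_of_mem hx2, if_pos rfl]
    rw [hxx]
    apply Submodule.add_mem_sup
    · rw [hc_mul hh1]
      split_ifs with hd
      · refine mem_Ih.mpr ⟨Ideal.mem_span_singleton_mul.mpr ⟨_, hI a haI _, rfl⟩, ?_⟩
        have := ((mem_homogeneousSubmodule _ _).mp hh1).mul
          ((mem_homogeneousSubmodule _ _).mp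
            ((mem_homogeneousSubmodule _ _).mpr (homogeneousComponent_isHomogeneous (s - e1) a)))
        rw [Nat.add_sub_cancel' hd] at this
        exact (mem_homogeneousSubmodule _ _).mpr this
      · exact zero_mem _
    · rw [hc_mul hh2]
      split_ifs with hd
      · refine mem_Ih.mpr ⟨Ideal.mem_span_singleton_mul.mpr ⟨_, hJ b hbJ _, rfl⟩, ?_⟩
        have := ((mem_homogeneousSubmodule _ _).mp hh2).mul
          ((mem_homogeneousSubmodule _ _).mp
            ((mem_homogeneousSubmodule _ _).mpr (homogeneousComponent_isHomogeneous (s - e2) b)))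
        rw [Nat.add_sub_cancel' hd] at this
        exact (mem_homogeneousSubmodule _ _).mpr this
      · exact zero_mem _
  · exact sup_le (Ih_mono le_sup_left s) (Ih_mono le_sup_right s)

lemma ideal_inf1 {F G : R3 k} (hrp : RegPair F G) {IX : Ideal (R3 k)} (hF : F ∈ IX) :
    Ideal.span {G} * IX ⊓ Ideal.span {F} = Ideal.span {F * G} := by
  ext x
  constructor
  · intro hx
    obtain ⟨hx1, hx2⟩ := Ideal.mem_inf.mp hx
    obtain ⟨a, haI, hax⟩ := Ideal.mem_span_singleton_mul.mp hx1
    have ha : a ∈ Ideal.span {F} := hrp.2 a (by rw [hax]; exact hx2)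
    obtain ⟨c, hc⟩ := Ideal.mem_span_singleton.mp ha
    exact Ideal.mem_span_singleton.mpr ⟨c, by rw [← hax, hc]; ring⟩
  · intro hx
    obtain ⟨c, hc⟩ := Ideal.mem_span_singleton.mp hx
    rw [hc]
    refine Ideal.mem_inf.mpr ⟨?_, ?_⟩
    · exact Ideal.mem_span_singleton_mul.mpr
        ⟨F * c, Ideal.mul_mem_right c IX hF, by ring⟩
    · exact Ideal.mem_span_singleton.mpr ⟨G * c, by ring⟩

lemma finrank_map_mul {h : R3 k} (hne : h ≠ 0) (W : Submodule k (R3 k)) :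
    Module.finrank k (Submodule.map (LinearMap.mulLeft k h) W) = Module.finrank k W := by
  have hinj : Function.Injective (LinearMap.mulLeft k h) := by
    intro a b hab
    simp only [LinearMap.mulLeft_apply] at hab
    exact mul_left_cancel₀ hne hab
  exact (LinearEquiv.finrank_eq (Submodule.equivMapOfInjective _ hinj W)).symm


lemma Ih_span {h : R3 k} {d : ℕ} (hh : h ∈ homogeneousSubmodule (Fin 3) k d)
    {s : ℕ} (hds : d ≤ s) :
    Ih (Ideal.span {h}) s =
      Submodule.map (LinearMap.mulLeft k h) (homogeneousSubmodule (Fin 3) k (s - d)) := by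
  have := Ih_mul_span hh (homogTop (k := k)) hds (I := ⊤)
  rwa [Ideal.mul_top, Ih_top] at this

lemma Ih_span_bot {h : R3 k} {d : ℕ} (hh : h ∈ homogeneousSubmodule (Fin 3) k d)
    {s : ℕ} (hds : s < d) : Ih (Ideal.span {h}) s = ⊥ := by
  have := Ih_mul_span_bot hh (⊤ : Ideal (R3 k)) hds
  rwa [Ideal.mul_top] at this

lemma Ih_mul_span_sup {h1 h2 : R3 k} {e1 e2 : ℕ}
    (hh1 : h1 ∈ homogeneousSubmodule (Fin 3) k e1)
    (hh2 : h2 ∈ homogeneousSubmodule (Fin 3) k e2)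
    {I : Ideal (R3 k)} (hI : HomogIdeal I) (s : ℕ) :
    Ih (Ideal.span {h1} * I ⊔ Ideal.span {h2}) s =
      Ih (Ideal.span {h1} * I) s ⊔ Ih (Ideal.span {h2}) s := by
  have := Ih_sup hh1 hh2 hI (homogTop (k := k)) s (J := ⊤)
  rwa [Ideal.mul_top (Ideal.span {h2})] at this

lemma Ih_span_sup {h1 h2 : R3 k} {e1 e2 : ℕ}
    (hh1 : h1 ∈ homogeneousSubmodule (Fin 3) k e1)
    (hh2 : h2 ∈ homogeneousSubmodule (Fin 3) k e2) (s : ℕ) :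
    Ih (Ideal.span {h1} ⊔ Ideal.span {h2}) s =
      Ih (Ideal.span {h1}) s ⊔ Ih (Ideal.span {h2}) s := by
  have := Ih_mul_span_sup hh1 hh2 (homogTop (k := k)) s (I := ⊤)
  rwa [Ideal.mul_top (Ideal.span {h1})] at this

lemma ideal_inf2 {F G : R3 k} (hrp : RegPair F G) :
    Ideal.span {G} ⊓ Ideal.span {F} = Ideal.span {F * G} := by
  have := ideal_inf1 hrp (IX := ⊤) trivial
  rwa [Ideal.mul_top] at this

lemma span_pair_eq (F G : R3 k) :
    Ideal.span {F, G} = Ideal.span {G} ⊔ Ideal.span {F} := by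
  rw [Ideal.span_insert, sup_comm]

lemma G_ne_zero {F G : R3 k} {IX : Ideal (R3 k)} (hne : IX ≠ ⊤) (hF : F ∈ IX)
    (hrp : RegPair F G) : G ≠ 0 := by
  rintro rfl
  have h1 : (1 : R3 k) ∈ Ideal.span {F} := hrp.2 1 (by simp)
  obtain ⟨c, hc⟩ := Ideal.mem_span_singleton.mp h1
  exact hne (IX.eq_top_of_isUnit_mem hF (isUnit_of_dvd_one ⟨c, hc⟩))

set_option maxHeartbeats 2000000 in
theorem part4 (IX : Ideal (R3 k)) (hhom : HomogIdeal IX) (hne : IX ≠ ⊤)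
    (F G : R3 k) (d1 d2 : ℕ) (hF : F ∈ IX)
    (hFd : F ∈ homogeneousSubmodule (Fin 3) k d1)
    (hGd : G ∈ homogeneousSubmodule (Fin 3) k d2)
    (hrp : RegPair F G) (s : ℕ) :
    hilb (Ideal.span {G} * IX ⊔ Ideal.span {F}) s =
      hilb (Ideal.span {F, G}) s + if d2 ≤ s then hilb IX (s - d2) else 0 := by
  have hF0 : F ≠ 0 := hrp.1
  have hG0 : G ≠ 0 := G_ne_zero hne hF hrp
  have hIZ : Ih (Ideal.span {G} * IX ⊔ Ideal.span {F}) s =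
      Ih (Ideal.span {G} * IX) s ⊔ Ih (Ideal.span {F}) s :=
    Ih_mul_span_sup hGd hFd hhom s
  have hCI : Ih (Ideal.span {F, G}) s =
      Ih (Ideal.span {G}) s ⊔ Ih (Ideal.span {F}) s := by
    rw [span_pair_eq]
    exact Ih_span_sup hGd hFd s
  have hinf1 : Ih (Ideal.span {G} * IX) s ⊓ Ih (Ideal.span {F}) s =
      Ih (Ideal.span {F * G}) s := by
    rw [← Ih_inf, ideal_inf1 hrp hF]
  have hinf2 : Ih (Ideal.span {G}) s ⊓ Ih (Ideal.span {F}) s =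
      Ih (Ideal.span {F * G}) s := by
    rw [← Ih_inf, ideal_inf2 hrp]
  have eq1 := Submodule.finrank_sup_add_finrank_inf_eq
    (Ih (Ideal.span {G} * IX) s) (Ih (Ideal.span {F}) s)
  rw [hinf1, ← hIZ] at eq1
  have eq2 := Submodule.finrank_sup_add_finrank_inf_eq
    (Ih (Ideal.span {G}) s) (Ih (Ideal.span {F}) s)
  rw [hinf2, ← hCI] at eq2
  have hPle := finrank_Ih_le (Ideal.span {G} * IX ⊔ Ideal.span {F}) s
  have hQle := finrank_Ih_le (Ideal.span {F, G}) s
  have huB : Module.finrank k (Ih (Ideal.span {G} * IX) s) ≤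
      Module.finrank k (Ih (Ideal.span {G}) s) := by
    exact Submodule.finrank_mono (Ih_mono Ideal.mul_le_left s)
  rw [hilb_eq, hilb_eq]
  by_cases hd2 : d2 ≤ s
  · rw [if_pos hd2, hilb_eq]
    have hB : Module.finrank k (Ih (Ideal.span {G}) s) =
        Module.finrank k (homogeneousSubmodule (Fin 3) k (s - d2)) := by
      rw [Ih_span hGd hd2, finrank_map_mul hG0]
    have hu : Module.finrank k (Ih (Ideal.span {G} * IX) s) =
        Module.finrank k (Ih IX (s - d2)) := by
      rw [Ih_mul_span hGd hhom hd2, finrank_map_mul hG0]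
    have hle2 := finrank_Ih_le IX (s - d2)
    omega
  · rw [if_neg hd2]
    have hB : Module.finrank k (Ih (Ideal.span {G}) s) = 0 := by
      rw [Ih_span_bot hGd (by omega), finrank_bot k (R3 k)]
    have hu : Module.finrank k (Ih (Ideal.span {G} * IX) s) = 0 := by
      rw [Ih_mul_span_bot hGd _ (by omega), finrank_bot k (R3 k)]
    omega

set_option maxHeartbeats 2000000 in
theorem hilbFG (F G : R3 k) (d1 d2 : ℕ)
    (hFd : F ∈ homogeneousSubmodule (Fin 3) k d1)
    (hGd : G ∈ homogeneousSubmodule (Fin 3) k d2)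
    (hF0 : F ≠ 0) (hG0 : G ≠ 0)
    (hrp : RegPair F G) (n : ℕ) :
    hilb (Ideal.span {F, G}) (d1 + d2 + n) = d1 * d2 := by
  set s := d1 + d2 + n with hs
  have hCI : Ih (Ideal.span {F, G}) s =
      Ih (Ideal.span {G}) s ⊔ Ih (Ideal.span {F}) s := by
    rw [span_pair_eq]
    exact Ih_span_sup hGd hFd s
  have hinf2 : Ih (Ideal.span {G}) s ⊓ Ih (Ideal.span {F}) s =
      Ih (Ideal.span {F * G}) s := by
    rw [← Ih_inf, ideal_inf2 hrp]
  have eq2 := Submodule.finrank_sup_add_finrank_inf_eq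
    (Ih (Ideal.span {G}) s) (Ih (Ideal.span {F}) s)
  rw [hinf2, ← hCI] at eq2
  have hA : Module.finrank k (Ih (Ideal.span {F}) s) = (d2 + n + 2).choose 2 := by
    rw [Ih_span hFd (by omega), finrank_map_mul hF0,
      show s - d1 = d2 + n by omega, dimH]
  have hB : Module.finrank k (Ih (Ideal.span {G}) s) = (d1 + n + 2).choose 2 := by
    rw [Ih_span hGd (by omega), finrank_map_mul hG0,
      show s - d2 = d1 + n by omega, dimH]
  have hFG : F * G ∈ homogeneousSubmodule (Fin 3) k (d1 + d2) :=
    (mem_homogeneousSubmodule _ _).mpr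
      (((mem_homogeneousSubmodule _ _).mp hFd).mul ((mem_homogeneousSubmodule _ _).mp hGd))
  have hC : Module.finrank k (Ih (Ideal.span {F * G}) s) = (n + 2).choose 2 := by
    rw [Ih_span hFG (by omega), finrank_map_mul (mul_ne_zero hF0 hG0),
      show s - (d1 + d2) = n by omega, dimH]
  have hQle := finrank_Ih_le (Ideal.span {F, G}) s
  rw [dimH] at hQle
  rw [hilb_eq, dimH]
  rw [hA, hB, hC] at eq2
  have hid : (s + 2).choose 2 + (n + 2).choose 2 =
      (d2 + n + 2).choose 2 + (d1 + n + 2).choose 2 + d1 * d2 := by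
    apply Nat.eq_of_mul_eq_mul_left (show 0 < 2 by norm_num)
    rw [Nat.mul_add, Nat.mul_add, Nat.mul_add, choose2, choose2, choose2, choose2, hs]
    ring
  omega


lemma sat_BDL (IX : Ideal (R3 k)) (hsat : IsSat IX) (F G : R3 k) (hF : F ∈ IX)
    (hrp : RegPair F G) : IsSat (Ideal.span {G} * IX ⊔ Ideal.span {F}) := by
  intro f hf
  have hF0 := hrp.1
  have hex : ∀ i : Fin 3, ∃ p : R3 k × R3 k, p.1 ∈ IX ∧ X i * f = G * p.1 + F * p.2 := by
    intro i
    obtain ⟨y, hy, z, hz, hyz⟩ := Submodule.mem_sup.mp (hf i)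
    obtain ⟨a, ha, hGa⟩ := Ideal.mem_span_singleton_mul.mp hy
    obtain ⟨b, hb⟩ := Ideal.mem_span_singleton.mp hz
    exact ⟨(a, b), ha, by rw [← hyz, ← hGa, ← hb]⟩
  choose p ha hab using hex
  set a : Fin 3 → R3 k := fun i => (p i).1 with ha_def
  set b : Fin 3 → R3 k := fun i => (p i).2 with hb_def
  have key : ∀ i j : Fin 3, ∃ c, X j * a i - X i * a j = F * c ∧
      G * c = X i * b j - X j * b i := by
    intro i j
    have h1 : G * (X j * a i - X i * a j) = F * (X i * b j - X j * b i) := by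
      linear_combination X i * hab j - X j * hab i
    have h2 : X j * a i - X i * a j ∈ Ideal.span {F} := by
      apply hrp.2
      exact Ideal.mem_span_singleton.mpr ⟨X i * b j - X j * b i, h1⟩
    obtain ⟨c, hc⟩ := Ideal.mem_span_singleton.mp h2
    refine ⟨c, hc, mul_left_cancel₀ hF0 ?_⟩
    linear_combination h1 - G * hc
  choose c hc1 hc2 using key
  have hco : X 0 * (c 1 2) = X 1 * (c 0 2) - X 2 * (c 0 1) := by
    apply mul_left_cancel₀ hF0
    linear_combination -X 0 * hc1 1 2 + X 1 * hc1 0 2 - X 2 * hc1 0 1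
  obtain ⟨d0, d1, d2, hu, hv, hw⟩ := koszul2 (c 1 2) (c 0 2) (c 0 1) hco
  set d : Fin 3 → R3 k := ![d0, d1, d2] with hd_def
  set a' : Fin 3 → R3 k := fun i => a i + F * d i with ha'_def
  have h01 : X 1 * a' 0 = X 0 * a' 1 := by
    simp only [ha'_def, hd_def]
    show X 1 * (a 0 + F * d0) = X 0 * (a 1 + F * d1)
    linear_combination hc1 0 1 + F * hw
  have h02 : X 2 * a' 0 = X 0 * a' 2 := by
    simp only [ha'_def, hd_def]
    show X 2 * (a 0 + F * d0) = X 0 * (a 2 + F * d2)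
    linear_combination hc1 0 2 + F * hv
  obtain ⟨A, hA⟩ := koszul1 a' h01 h02
  have hAIX : A ∈ IX := by
    apply hsat
    intro i
    rw [← hA i]
    exact Ideal.add_mem _ (ha i) (Ideal.mul_mem_right _ _ hF)
  set b' : Fin 3 → R3 k := fun i => b i - G * d i with hb'_def
  have hXb : ∀ i, X i * (f - G * A) = F * b' i := by
    intro i
    have h := hab i
    have h2 : a i = X i * A - F * d i := by
      have := hA i
      simp only [ha'_def] at this
      linear_combination this
    simp only [hb'_def]
    linear_combination h + G * h2
  have hb01 : X 1 * b' 0 = X 0 * b' 1 := by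
    apply mul_left_cancel₀ hF0
    linear_combination X 0 * hXb 1 - X 1 * hXb 0
  have hb02 : X 2 * b' 0 = X 0 * b' 2 := by
    apply mul_left_cancel₀ hF0
    linear_combination X 0 * hXb 2 - X 2 * hXb 0
  obtain ⟨B, hB⟩ := koszul1 b' hb01 hb02
  have hfin : f = G * A + F * B := by
    have h0 : X 0 * (f - G * A - F * B) = 0 := by
      have := hXb 0
      rw [hB 0] at this
      linear_combination this
    rcases mul_eq_zero.mp h0 with h | h
    · exact absurd h (X_ne_zero 0)
    · linear_combination h
  rw [hfin]
  apply Submodule.add_mem_sup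
  · exact Ideal.mem_span_singleton_mul.mpr ⟨A, hAIX, rfl⟩
  · exact Ideal.mem_span_singleton.mpr ⟨B, rfl⟩


end Stmt5Aux

open Stmt5Aux in
/-- basic double linkage.  If `I_X` is the saturated ideal of a
zero-dimensional subscheme of `ℙ²`, `F ∈ I_X` homogeneous of degree `d₁`, `G`
homogeneous of degree `d₂` and `{F,G}` a regular sequence, then `I_Z = G·I_X + (F)`
is the saturated ideal of a zero-dimensional scheme, there is a short exact sequence
`0 → R(-d₁-d₂) → I_X(-d₂) ⊕ R(-d₁) → I_Z → 0`, and
`h_{R/I_Z}(t) = h_{R/(F,G)}(t) + h_{R/I_X}(t-d₂)`; in particular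
`deg Z = deg X + d₁d₂`. -/
theorem stmt5 [CharZero k] (IX : Ideal (R3 k)) (hhom : HomogIdeal IX)
    (hsat : IsSat IX) (hne : IX ≠ ⊤) (hzd : ∃ N c, ∀ s, N ≤ s → hilb IX s = c)
    (F G : R3 k) (d1 d2 : ℕ) (hF : F ∈ IX) (hFd : IsHomog F d1) (hGd : IsHomog G d2)
    (hrp : RegPair F G) :
    let IZ : Ideal (R3 k) := Ideal.span {G} * IX ⊔ Ideal.span {F}
    IsSat IZ ∧ (∃ N c, ∀ s, N ≤ s → hilb IZ s = c) ∧
    (∃ (f1 : R3 k →ₗ[R3 k] (↥IX × R3 k)) (f2 : (↥IX × R3 k) →ₗ[R3 k] R3 k),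
      (∀ a : R3 k, ((f1 a).1 : R3 k) = F * a ∧ (f1 a).2 = -(G * a)) ∧
      (∀ p : ↥IX × R3 k, f2 p = G * (p.1 : R3 k) + F * p.2) ∧
      Function.Injective f1 ∧ Function.Exact f1 f2 ∧ LinearMap.range f2 = IZ) ∧
    (∀ s : ℕ, hilb IZ s =
      hilb (Ideal.span {F, G}) s + (if d2 ≤ s then hilb IX (s - d2) else 0)) ∧
    (∃ N, ∀ s, N ≤ s → hilb IZ s = hilb IX s + d1 * d2) := by
  intro IZ
  have hF0 : F ≠ 0 := hrp.1
  have hG0 : G ≠ 0 := G_ne_zero hne hF hrp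
  have hpart4 : ∀ s : ℕ, hilb IZ s =
      hilb (Ideal.span {F, G}) s + (if d2 ≤ s then hilb IX (s - d2) else 0) :=
    fun s => part4 IX hhom hne F G d1 d2 hF hFd hGd hrp s
  have hFGconst : ∀ s, d1 + d2 ≤ s → hilb (Ideal.span {F, G}) s = d1 * d2 := by
    intro s hs
    have := hilbFG F G d1 d2 hFd hGd hF0 hG0 hrp (s - (d1 + d2))
    rwa [show d1 + d2 + (s - (d1 + d2)) = s by omega] at this
  obtain ⟨N0, c0, hN0⟩ := hzd
  refine ⟨?_, ?_, ?_, hpart4, ?_⟩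
  · exact sat_BDL IX hsat F G hF hrp
  · refine ⟨N0 + d1 + d2 + d2, d1 * d2 + c0, ?_⟩
    intro s hs
    rw [hpart4 s, if_pos (by omega), hFGconst s (by omega), hN0 (s - d2) (by omega)]
  · -- the exact sequence
    refine ⟨{ toFun := fun a => (⟨F * a, Ideal.mul_mem_right a IX hF⟩, -(G * a)),
              map_add' := ?_, map_smul' := ?_ },
            { toFun := fun p => G * (p.1 : R3 k) + F * p.2,
              map_add' := ?_, map_smul' := ?_ }, ?_, ?_, ?_, ?_, ?_⟩
    · intro a b
      refine Prod.ext (Subtype.ext ?_) ?_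
      · show F * (a + b) = F * a + F * b
        ring
      · show -(G * (a + b)) = -(G * a) + -(G * b)
        ring
    · intro c a
      refine Prod.ext (Subtype.ext ?_) ?_
      · show F * (c * a) = c * (F * a)
        ring
      · show -(G * (c * a)) = c * -(G * a)
        ring
    · intro p q
      show G * ((p.1 : R3 k) + q.1) + F * (p.2 + q.2) = _
      ring
    · intro c p
      show G * (c * (p.1 : R3 k)) + F * (c * p.2) = c * _
      ring
    · intro a
      exact ⟨rfl, rfl⟩
    · intro p
      rfl
    · intro a b hab
      have h1 : F * a = F * b := congrArg (fun p => (p.1 : R3 k)) hab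
      exact mul_left_cancel₀ hF0 h1
    · intro y
      constructor
      · intro hy
        have hy' : G * (y.1 : R3 k) + F * y.2 = 0 := hy
        have h1 : (y.1 : R3 k) ∈ Ideal.span {F} := by
          apply hrp.2
          exact Ideal.mem_span_singleton.mpr ⟨-y.2, by linear_combination hy'⟩
        obtain ⟨a, ha⟩ := Ideal.mem_span_singleton.mp h1
        refine ⟨a, ?_⟩
        refine Prod.ext (Subtype.ext ?_) ?_
        · exact ha.symm
        · show -(G * a) = y.2
          apply mul_left_cancel₀ hF0
          linear_combination G * ha - hy'
      · rintro ⟨a, rfl⟩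
        show G * (F * a) + F * (-(G * a)) = 0
        ring
    · apply le_antisymm
      · rintro x ⟨p, rfl⟩
        apply Submodule.add_mem_sup
        · exact Ideal.mem_span_singleton_mul.mpr ⟨p.1, p.1.2, rfl⟩
        · exact Ideal.mem_span_singleton.mpr ⟨p.2, rfl⟩
      · intro x hx
        obtain ⟨y, hy, z, hz, hyz⟩ := Submodule.mem_sup.mp hx
        obtain ⟨a, haI, hay⟩ := Ideal.mem_span_singleton_mul.mp hy
        obtain ⟨b, hbz⟩ := Ideal.mem_span_singleton.mp hz
        exact ⟨(⟨a, haI⟩, b), by rw [← hyz, ← hay, hbz]; rfl⟩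
  · refine ⟨N0 + d1 + d2 + d2, ?_⟩
    intro s hs
    rw [hpart4 s, if_pos (by omega), hFGconst s (by omega), hN0 (s - d2) (by omega),
      hN0 s (by omega)]
    ring

end
end

section
/- For the standard pseudo linear configuration of type (1,1,2,2,3,3,...,m,m) in P^2 (points at integer lattice positions with rows aligned to the left), the set contains 2m collinear points (on the vertical line x = 0), and hence its regularity is at least 2m, which exceeds the largest entry m of the type vector; thus condition (*) failing allows regularity arbitrarily larger than m_p. -/
open MvPolynomial

noncomputable section

variable {k : Type} [Field k]

-- auxiliary development
namespace Stmt12A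

instance fdH (t : ℕ) : FiniteDimensional k (homogeneousSubmodule (Fin 3) k t) := by
  apply Submodule.finiteDimensional_of_le (S₂ := restrictTotalDegree (Fin 3) k t)
  intro f hf
  rw [mem_restrictTotalDegree]
  exact MvPolynomial.IsHomogeneous.totalDegree_le hf

lemma homog_eval_smul {f : R3 k} {n : ℕ} (hf : f.IsHomogeneous n) (c : k) (x : Fin 3 → k) :
    eval (c • x) f = c ^ n * eval x f := by
  rw [eval_eq, eval_eq, Finset.mul_sum]
  refine Finset.sum_congr rfl fun d hd => ?_
  have hdeg : ∑ i ∈ d.support, d i = n := by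
    have h1 := hf (mem_support_iff.mp hd)
    have h2 : Finsupp.degree d = Finsupp.weight 1 d := by
      rw [Finsupp.degree_eq_weight_one]; rfl
    rw [show (∑ i ∈ d.support, d i) = Finsupp.degree d from rfl, h2, h1]
  have : ∏ i ∈ d.support, (c • x) i ^ d i
      = c ^ n * ∏ i ∈ d.support, x i ^ d i := by
    rw [← hdeg, ← Finset.prod_pow_eq_pow_sum, ← Finset.prod_mul_distrib]
    refine Finset.prod_congr rfl fun i _ => ?_
    simp [Pi.smul_apply, smul_eq_mul, mul_pow]
  rw [this]; ring

lemma mem_vIdeal {T : Set (Fin 3 → k)} {f : R3 k} :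
    f ∈ vIdeal T ↔ ∀ x ∈ T, eval x f = 0 := Iff.rfl

lemma mem_radIdeal {S : Finset (Fin 3 → k)} {f : R3 k} :
    f ∈ radIdeal S ↔ ∀ p ∈ S, ∀ c : k, eval (c • p) f = 0 := by
  simp only [radIdeal, Ideal.mem_iInf]
  constructor
  · intro h p hp c
    exact (mem_vIdeal.mp (h p hp)) _ ⟨c, rfl⟩
  · intro h p hp
    rw [pointIdeal, mem_vIdeal]
    rintro x ⟨c, rfl⟩
    exact h p hp c

def Φ (S : Finset (Fin 3 → k)) (t : ℕ) :
    homogeneousSubmodule (Fin 3) k t →ₗ[k] (S → k) where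
  toFun f p := eval (p : Fin 3 → k) (f : R3 k)
  map_add' f g := by funext p; simp
  map_smul' c f := by funext p; simp [smul_eval]

lemma ker_Φ (S : Finset (Fin 3 → k)) (t : ℕ) [Infinite k] :
    LinearMap.ker (Φ S t) =
      (Submodule.restrictScalars k (radIdeal S) ⊓
        homogeneousSubmodule (Fin 3) k t).comap
          (homogeneousSubmodule (Fin 3) k t).subtype := by
  ext f
  simp only [LinearMap.mem_ker, Submodule.mem_comap, Submodule.mem_inf,
    Submodule.coe_subtype, Submodule.restrictScalars_mem]
  constructor
  · intro h
    refine ⟨mem_radIdeal.mpr fun p hp c => ?_, f.2⟩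
    have h0 : eval p (f : R3 k) = 0 := congrFun h ⟨p, hp⟩
    rw [homog_eval_smul f.2 c p, h0, mul_zero]
  · rintro ⟨h, -⟩
    funext p
    have := mem_radIdeal.mp h p p.2 1
    rwa [one_smul] at this

lemma hilb_eq (S : Finset (Fin 3 → k)) (t : ℕ) [Infinite k] :
    hilb (radIdeal S) t = Module.finrank k (LinearMap.range (Φ S t)) := by
  classical
  have h1 := LinearMap.finrank_range_add_finrank_ker (Φ S t)
  have h2 : Module.finrank k
      ↥(Submodule.restrictScalars k (radIdeal S) ⊓ homogeneousSubmodule (Fin 3) k t)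
      = Module.finrank k (LinearMap.ker (Φ S t)) := by
    rw [ker_Φ]
    rw [← Submodule.finrank_map_subtype_eq (homogeneousSubmodule (Fin 3) k t)]
    rw [Submodule.map_comap_subtype, inf_of_le_right inf_le_right]
  rw [hilb, h2]
  omega


lemma range_mono (S : Finset (Fin 3 → k)) (hz : ∀ p ∈ S, p 2 = 1) (t : ℕ) :
    LinearMap.range (Φ S t) ≤ LinearMap.range (Φ S (t + 1)) := by
  rintro v ⟨f, rfl⟩
  refine ⟨⟨X 2 * (f : R3 k), ?_⟩, ?_⟩
  · have := (isHomogeneous_X k (2 : Fin 3)).mul f.2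
    rwa [add_comm] at this
  · funext p
    show eval (p : Fin 3 → k) (X 2 * (f : R3 k)) = eval (p : Fin 3 → k) (f : R3 k)
    rw [map_mul, eval_X, hz p p.2, one_mul]

lemma natDegree_aeval_le {f : R3 k} {n : ℕ} (hf : f.IsHomogeneous n) :
    (MvPolynomial.aeval ![0, Polynomial.X, 1] f : Polynomial k).natDegree ≤ n := by
  conv_lhs => rw [← support_sum_monomial_coeff f, map_sum]
  apply Polynomial.natDegree_sum_le_of_forall_le
  intro d hd
  have hdeg : ∑ i ∈ d.support, d i = n := by
    have h1 := hf (mem_support_iff.mp hd)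
    have h2 : Finsupp.degree d = Finsupp.weight 1 d := by
      rw [Finsupp.degree_eq_weight_one]; rfl
    rw [show (∑ i ∈ d.support, d i) = Finsupp.degree d from rfl, h2, h1]
  rw [aeval_monomial]
  refine (Polynomial.natDegree_mul_le).trans ?_
  have h0 : (algebraMap k (Polynomial k) (coeff d f)).natDegree = 0 :=
    Polynomial.natDegree_C _
  rw [h0, zero_add]
  rw [Finsupp.prod]
  refine (Polynomial.natDegree_prod_le _ _).trans ?_
  rw [← hdeg]
  apply Finset.sum_le_sum
  intro i _
  refine Polynomial.natDegree_pow_le.trans ?_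
  have : (![0, Polynomial.X, (1 : Polynomial k)] i).natDegree ≤ 1 := by
    fin_cases i <;> simp
  calc d i * (![0, Polynomial.X, (1 : Polynomial k)] i).natDegree
      ≤ d i * 1 := Nat.mul_le_mul_left _ this
    _ = d i := mul_one _

lemma eval_aeval (f : R3 k) (x : k) :
    ((MvPolynomial.aeval ![0, Polynomial.X, 1] f : Polynomial k)).eval x
      = eval ![0, x, 1] f := by
  have h := MvPolynomial.comp_aeval (f := ![0, Polynomial.X, (1 : Polynomial k)])
      (φ := Polynomial.aeval x)
  have h2 := congrFun (congrArg (fun g => g.toFun) h) f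
  simp only [AlgHom.toFun_eq_coe, AlgHom.coe_comp, Function.comp_apply] at h2
  rw [Polynomial.coe_aeval_eq_eval] at h2
  rw [h2]
  have h3 : (fun i => Polynomial.eval x (![0, Polynomial.X, (1 : Polynomial k)] i))
      = ![0, x, 1] := by
    funext i; fin_cases i <;> simp
  rw [h3]
  rw [MvPolynomial.aeval_def, Algebra.algebraMap_self]
  rfl


lemma pow_mem_range (S : Finset (Fin 3 → k)) (t : ℕ) :
    (fun p : S => ((p : Fin 3 → k) 1) ^ t) ∈ LinearMap.range (Φ S t) := by
  refine ⟨⟨(X 1) ^ t, isHomogeneous_X_pow (R := k) 1 t⟩, ?_⟩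
  funext p
  show eval (p : Fin 3 → k) ((X 1 : R3 k) ^ t) = _
  rw [map_pow, eval_X]

lemma pow_not_mem_range [CharZero k] (S : Finset (Fin 3 → k)) (t : ℕ) (ht : 0 < t)
    (hcol : ∀ i : ℕ, i ≤ t → ![0, (i : k), 1] ∈ S) :
    (fun p : S => ((p : Fin 3 → k) 1) ^ t) ∉ LinearMap.range (Φ S (t - 1)) := by
  classical
  rintro ⟨f, hf⟩
  set P := (MvPolynomial.aeval ![0, Polynomial.X, 1] (f : R3 k) : Polynomial k) with hP
  have hdegP : P.natDegree ≤ t - 1 := natDegree_aeval_le f.2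
  set Q := Polynomial.X ^ t - P with hQ
  have hevalQ : ∀ i : ℕ, i ≤ t → Q.eval ((i : k)) = 0 := by
    intro i hi
    have h1 : P.eval (i : k) = ((i : k)) ^ t := by
      have h2 := congrFun hf ⟨![0, (i : k), 1], hcol i hi⟩
      have h3 : eval ![0, (i : k), 1] (f : R3 k) = (![0, (i : k), 1] 1) ^ t := h2
      rw [hP, eval_aeval, h3]
      simp
    simp [hQ, h1]
  have hcard : Q.natDegree < ((Finset.range (t + 1)).image (Nat.cast : ℕ → k)).card := by
    rw [Finset.card_image_of_injective _ Nat.cast_injective, Finset.card_range]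
    have hx : (Polynomial.X ^ t : Polynomial k).natDegree = t := Polynomial.natDegree_X_pow t
    have h5 : Q.natDegree ≤ t := by
      rw [hQ]
      refine (Polynomial.natDegree_sub_le _ _).trans ?_
      rw [hx]
      exact max_le le_rfl (hdegP.trans (Nat.sub_le t 1))
    omega
  have hQ0 : Q = 0 := by
    apply Polynomial.eq_zero_of_natDegree_lt_card_of_eval_eq_zero' _ _ _ hcard
    intro x hx
    rcases Finset.mem_image.mp hx with ⟨i, hi, rfl⟩
    exact hevalQ i (Nat.lt_succ_iff.mp (Finset.mem_range.mp hi))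
  have hc : Q.coeff t = 1 := by
    rw [hQ, Polynomial.coeff_sub, Polynomial.coeff_X_pow, if_pos rfl,
      Polynomial.coeff_eq_zero_of_natDegree_lt (by omega), sub_zero]
  rw [hQ0] at hc
  simp at hc

lemma range_strict [CharZero k] (S : Finset (Fin 3 → k)) (hz : ∀ p ∈ S, p 2 = 1)
    (t : ℕ) (ht : 0 < t) (hcol : ∀ i : ℕ, i ≤ t → ![0, (i : k), 1] ∈ S) :
    Module.finrank k (LinearMap.range (Φ S (t - 1)))
      < Module.finrank k (LinearMap.range (Φ S t)) := by
  apply Submodule.finrank_lt_finrank_of_lt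
  rw [lt_iff_le_and_ne]
  constructor
  · have h5 := range_mono S hz (t - 1)
    rwa [Nat.sub_add_cancel ht] at h5
  · intro h
    exact pow_not_mem_range S t ht hcol (h ▸ pow_mem_range S t)

end Stmt12A

/-- the standard pseudo linear configuration of type
`(1,1,2,2,…,m,m)` contains `2m` collinear points (the column `x = 0`), so its
regularity is at least `2m > m`. -/
theorem stmt12 [CharZero k] [DecidableEq k] (m : ℕ) (hm : 0 < m) :
    let S : Finset (Fin 3 → k) := (Finset.range (2 * m)).biUnion
      (fun i => (Finset.range (i / 2 + 1)).image fun j : ℕ => ![(j : k), (i : k), 1])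
    (S.filter fun q => q 0 = 0).card = 2 * m ∧
    (∀ q ∈ S.filter fun q => q 0 = 0, onLine ![(1 : k), 0, 0] q) ∧
    2 * m ≤ regC (radIdeal S) ∧ m < 2 * m := by
  intro S
  have hz : ∀ p ∈ S, p 2 = 1 := by
    intro p hp
    simp only [S, Finset.mem_biUnion, Finset.mem_image, Finset.mem_range] at hp
    obtain ⟨i, hi, j, hj, rfl⟩ := hp
    simp
  have hcol : ∀ i : ℕ, i < 2 * m → ![0, (i : k), 1] ∈ S := by
    intro i hi
    simp only [S, Finset.mem_biUnion, Finset.mem_image, Finset.mem_range]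
    refine ⟨i, hi, 0, Nat.succ_pos _, ?_⟩
    norm_num
  refine ⟨?_, ?_, ?_, by omega⟩
  · have hfilter : S.filter (fun q => q 0 = 0)
        = (Finset.range (2 * m)).image (fun i : ℕ => ![(0 : k), (i : k), 1]) := by
      ext q
      simp only [S, Finset.mem_filter, Finset.mem_biUnion, Finset.mem_image, Finset.mem_range]
      constructor
      · rintro ⟨⟨i, hi, j, hj, rfl⟩, h0⟩
        refine ⟨i, hi, ?_⟩
        have hj0 : (j : k) = 0 := by simpa using h0
        have hj0' : j = 0 := Nat.cast_eq_zero.mp hj0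
        subst hj0'
        norm_num
      · rintro ⟨i, hi, rfl⟩
        refine ⟨⟨i, hi, 0, Nat.succ_pos _, by norm_num⟩, by simp⟩
    rw [hfilter, Finset.card_image_of_injOn, Finset.card_range]
    intro a _ b _ hab
    have h1 : (a : k) = (b : k) := by
      have := congrFun hab 1
      simpa using this
    exact Nat.cast_injective h1
  · intro q hq
    have h0 := (Finset.mem_filter.mp hq).2
    show (∑ i, ![(1 : k), 0, 0] i * q i) = 0
    rw [Fin.sum_univ_three]
    simpa using h0
  · have hilbR : ∀ t, hilb (radIdeal S) t
        = Module.finrank k (LinearMap.range (Stmt12A.Φ S t)) :=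
      fun t => Stmt12A.hilb_eq S t
    have mono : ∀ t : ℕ, hilb (radIdeal S) t ≤ hilb (radIdeal S) (t + 1) := by
      intro t
      rw [hilbR, hilbR]
      exact Submodule.finrank_mono (Stmt12A.range_mono S hz t)
    have bound : ∀ t, hilb (radIdeal S) t ≤ S.card := by
      intro t
      rw [hilbR]
      calc Module.finrank k (LinearMap.range (Stmt12A.Φ S t))
          ≤ Module.finrank k (↥S → k) := Submodule.finrank_le _
        _ = S.card := by rw [Module.finrank_pi]; exact Fintype.card_coe S
    have strict : ∀ t, 0 < t → t < 2 * m →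
        hilb (radIdeal S) (t - 1) < hilb (radIdeal S) t := by
      intro t ht h2m
      rw [hilbR, hilbR]
      exact Stmt12A.range_strict S hz t ht
        (fun i hi => hcol i (lt_of_le_of_lt hi h2m))
    have hne : {t | 0 < t ∧ hilb (radIdeal S) t = hilb (radIdeal S) (t - 1)}.Nonempty := by
      by_contra hempty
      rw [Set.not_nonempty_iff_eq_empty, Set.eq_empty_iff_forall_notMem] at hempty
      have hstrict : ∀ t : ℕ, hilb (radIdeal S) t < hilb (radIdeal S) (t + 1) := by
        intro t
        rcases lt_or_eq_of_le (mono t) with h | h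
        · exact h
        · exact absurd ⟨Nat.succ_pos t, by simpa using h.symm⟩ (hempty (t + 1))
      have hgrow : ∀ t : ℕ, t ≤ hilb (radIdeal S) t := by
        intro t
        induction t with
        | zero => exact Nat.zero_le _
        | succ n ih => exact lt_of_le_of_lt ih (hstrict n)
      have hb := bound (S.card + 1)
      have hg := hgrow (S.card + 1)
      omega
    rw [regC]
    apply le_csInf hne
    rintro t ⟨ht0, hteq⟩
    by_contra hlt
    push_neg at hlt
    exact absurd hteq (Nat.ne_of_gt (strict t ht0 hlt))


end
end
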